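/- arXiv:1909.13339 — 4 statements merged into one kernel-verified Lean document; each statement's English description precedes it below -/
import Mathlib

section
/- (Donsker–Varadhan variational formula) For a probability measure π on a measurable space Θ and a bounded measurable function h : Θ → ℝ, we have log ∫ e^h dπ = sup over probability measures ρ ≪ π of [∫ h dρ − KL(ρ‖π)]. -/
open MeasureTheory

/-- Kullback–Leibler divergence `KL(ρ‖π) = ∫ log (dρ/dπ) dρ`. -/
noncomputable def klDiv' {α : Type*} [MeasurableSpace α] (ρ π : Measure α) : ℝ :=
  ∫ θ, Real.log ((ρ.rnDeriv π θ).toReal) ∂ρ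

/-- Nonnegativity of the KL divergence. -/
lemma kl_nonneg_aux {α : Type*} [MeasurableSpace α] (μ ν : Measure α)
    [IsProbabilityMeasure μ] [IsProbabilityMeasure ν] (hμν : μ ≪ ν)
    (hint : Integrable (llr μ ν) μ) : 0 ≤ ∫ x, llr μ ν x ∂μ := by
  have hint2 : Integrable (fun x => (ν.rnDeriv μ x).toReal) μ :=
    Measure.integrable_toReal_rnDeriv
  have h1 : ∀ᵐ x ∂μ, -llr μ ν x ≤ (ν.rnDeriv μ x).toReal - 1 := by
    filter_upwards [exp_neg_llr hμν] with x hx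
    have := Real.add_one_le_exp (-llr μ ν x)
    rw [hx] at this
    linarith
  have h2 : ∫ x, -llr μ ν x ∂μ ≤ ∫ x, ((ν.rnDeriv μ x).toReal - 1) ∂μ :=
    integral_mono_ae hint.neg (hint2.sub (integrable_const 1)) h1
  have h3 : ∫ x, (ν.rnDeriv μ x).toReal ∂μ ≤ 1 := by
    have := Measure.setIntegral_toReal_rnDeriv_le (μ := ν) (ν := μ) (s := Set.univ)
      (measure_ne_top ν _)
    simpa using this
  rw [integral_sub hint2 (integrable_const 1), integral_neg] at h2
  simp only [integral_const, measure_univ, ENNReal.toReal_one, probReal_univ, smul_eq_mul, one_mul] at h2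
  linarith

/-- Donsker–Varadhan variational formula: for a probability measure `π` and a bounded
measurable `h`, `log ∫ e^h dπ = sup_{ρ ≪ π} [∫ h dρ − KL(ρ‖π)]`, the supremum being
over probability measures `ρ ≪ π` (with finite `KL(ρ‖π)`) and attained at
`ρ ∝ e^h·π`. -/
theorem stmt_9 {Θ : Type*} [MeasurableSpace Θ] (π : Measure Θ) [IsProbabilityMeasure π]
    (h : Θ → ℝ) (hmeas : Measurable h) (B : ℝ) (hbdd : ∀ θ, |h θ| ≤ B) :
    (∀ ρ : Measure Θ, IsProbabilityMeasure ρ → ρ ≪ π →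
        Integrable h ρ →
        Integrable (fun θ => Real.log ((ρ.rnDeriv π θ).toReal)) ρ →
        (∫ θ, h θ ∂ρ) - klDiv' ρ π ≤ Real.log (∫ θ, Real.exp (h θ) ∂π)) ∧
      (∃ ρ : Measure Θ, IsProbabilityMeasure ρ ∧ ρ ≪ π ∧
        Integrable h ρ ∧
        Integrable (fun θ => Real.log ((ρ.rnDeriv π θ).toReal)) ρ ∧
        (∫ θ, h θ ∂ρ) - klDiv' ρ π = Real.log (∫ θ, Real.exp (h θ) ∂π)) := by
  have hexp : Integrable (fun θ => Real.exp (h θ)) π := by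
    refine Integrable.mono' (integrable_const (Real.exp B))
      (hmeas.exp.aestronglyMeasurable) (ae_of_all _ fun θ => ?_)
    rw [Real.norm_eq_abs, abs_of_pos (Real.exp_pos _)]
    exact Real.exp_le_exp.mpr ((abs_le.mp (hbdd θ)).2)
  constructor
  · intro ρ hprob hac hinth hintllr
    have hintllr' : Integrable (llr ρ π) ρ := hintllr
    have heq : ∫ x, llr ρ (π.tilted h) x ∂ρ
        = ∫ x, llr ρ π x ∂ρ - ∫ x, h x ∂ρ + Real.log (∫ x, Real.exp (h x) ∂π) :=
      integral_llr_tilted_right hac hinth hexp hintllr'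
    haveI : IsProbabilityMeasure (π.tilted h) := isProbabilityMeasure_tilted hexp
    have hac2 : ρ ≪ π.tilted h := hac.trans (absolutelyContinuous_tilted hexp)
    have hint2 : Integrable (llr ρ (π.tilted h)) ρ :=
      integrable_llr_tilted_right hac hinth hintllr' hexp
    have hnn : 0 ≤ ∫ x, llr ρ (π.tilted h) x ∂ρ := kl_nonneg_aux ρ (π.tilted h) hac2 hint2
    have : klDiv' ρ π = ∫ x, llr ρ π x ∂ρ := rfl
    linarith [heq ▸ hnn]
  · refine ⟨π.tilted h, isProbabilityMeasure_tilted hexp, tilted_absolutelyContinuous π h, ?_⟩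
    haveI : IsProbabilityMeasure (π.tilted h) := isProbabilityMeasure_tilted hexp
    have hinth : Integrable h (π.tilted h) := by
      refine Integrable.mono' (integrable_const B)
        (hmeas.aestronglyMeasurable) (ae_of_all _ fun θ => ?_)
      exact hbdd θ
    have hlog : (fun θ => Real.log (((π.tilted h).rnDeriv π θ).toReal))
        =ᵐ[π.tilted h] fun θ => h θ - Real.log (∫ x, Real.exp (h x) ∂π) :=
      (tilted_absolutelyContinuous π h).ae_le (log_rnDeriv_tilted_left_self hexp)
    have hintllr : Integrable (fun θ => Real.log (((π.tilted h).rnDeriv π θ).toReal))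
        (π.tilted h) := by
      rw [integrable_congr hlog]
      exact hinth.sub (integrable_const _)
    refine ⟨hinth, hintllr, ?_⟩
    have : klDiv' (π.tilted h) π
        = ∫ θ, (h θ - Real.log (∫ x, Real.exp (h x) ∂π)) ∂(π.tilted h) :=
      integral_congr_ae hlog
    rw [this, integral_sub hinth (integrable_const _)]
    simp
end

section
/- Let X₁,...,Xₙ be i.i.d. from P₀ and let D_k be the MMD for a kernel bounded by 1. Let π be a prior on Θ, β > 0, and π_n^β(dθ) ∝ exp(−β·D_k²(P_θ, P̂ₙ)) π(dθ). Suppose the prior mass condition holds: π({θ : D_k(P_θ, P_{θ*}) ≤ n^{−1/2}}) ≥ e^{−β/n}, where θ* minimizes D_k(P_θ, P₀). Then E[∫ D_k²(P_θ, P₀) π_n^β(dθ)] ≤ 8·inf_{θ∈Θ} D_k²(P_θ, P₀) + 16/n. -/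
open MeasureTheory ProbabilityTheory

/-- The Gibbs measure `π_β(dθ) ∝ exp(−β·L(θ))·π(dθ)`. -/
noncomputable def gibbs {Θ : Type*} [MeasurableSpace Θ] (π : Measure Θ) (β : ℝ)
    (L : Θ → ℝ) : Measure Θ :=
  (∫⁻ θ, ENNReal.ofReal (Real.exp (-β * L θ)) ∂π)⁻¹ •
    π.withDensity fun θ => ENNReal.ofReal (Real.exp (-β * L θ))

open scoped ENNReal NNReal RealInnerProductSpace

lemma gibbs_prob_and_int {Θ : Type*} [MeasurableSpace Θ] (π : Measure Θ) [IsProbabilityMeasure π]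
    {β C c κ : ℝ} (hβ : 0 < β) (hc : 0 ≤ c) (hκ : 0 ≤ κ)
    {L : Θ → ℝ} (hLmeas : Measurable L) (hL0 : ∀ θ, 0 ≤ L θ) (hLC : ∀ θ, L θ ≤ C)
    {A : Set Θ} (hA : MeasurableSet A) (hLA : ∀ θ ∈ A, L θ ≤ c)
    (hmass : ENNReal.ofReal (Real.exp (-κ)) ≤ π A) :
    IsProbabilityMeasure (gibbs π β L) ∧ ∫ θ, L θ ∂(gibbs π β L) ≤ c + κ / β := by
  set f : Θ → ℝ := fun θ => Real.exp (-β * L θ) with hf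
  have hf0 : ∀ θ, 0 < f θ := fun θ => Real.exp_pos _
  have hf1 : ∀ θ, f θ ≤ 1 := fun θ =>
    Real.exp_le_one_iff.2 (by nlinarith [hL0 θ])
  have hfm : Measurable f := (hLmeas.const_mul (-β)).exp
  have hfint : Integrable f π := by
    refine (integrable_const (1:ℝ)).mono' hfm.aestronglyMeasurable (ae_of_all _ fun θ => ?_)
    rw [Real.norm_eq_abs, abs_of_pos (hf0 θ)]; exact hf1 θ
  set I : ℝ := ∫ θ, f θ ∂π with hI
  have hIle1 : I ≤ 1 := by
    calc I ≤ ∫ _, (1:ℝ) ∂π := integral_mono hfint (integrable_const _) hf1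
    _ = 1 := by simp
  -- lower bound on I
  have hπA : Real.exp (-κ) ≤ (π A).toReal := by
    have h1 : (ENNReal.ofReal (Real.exp (-κ))).toReal ≤ (π A).toReal :=
      ENNReal.toReal_mono (measure_ne_top _ _) hmass
    rwa [ENNReal.toReal_ofReal (Real.exp_pos _).le] at h1
  have hIlow : Real.exp (-β * c - κ) ≤ I := by
    have h1 : ∫ θ in A, Real.exp (-β * c) ∂π ≤ ∫ θ in A, f θ ∂π := by
      refine setIntegral_mono_on (integrableOn_const (measure_ne_top _ _))
        hfint.integrableOn hA (fun θ hθ => Real.exp_le_exp.2 (by nlinarith [hLA θ hθ]))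
    have h2 : ∫ θ in A, f θ ∂π ≤ I := setIntegral_le_integral hfint (ae_of_all _ fun θ => (hf0 θ).le)
    have h3 : ∫ θ in A, Real.exp (-β * c) ∂π = (π A).toReal • Real.exp (-β * c) :=
      setIntegral_const _
    have h4 : Real.exp (-β * c - κ) ≤ (π A).toReal * Real.exp (-β * c) := by
      rw [sub_eq_add_neg, Real.exp_add]
      calc Real.exp (-β*c) * Real.exp (-κ) ≤ Real.exp (-β*c) * (π A).toReal := by
            exact mul_le_mul_of_nonneg_left hπA (Real.exp_pos _).le
        _ = (π A).toReal * Real.exp (-β*c) := mul_comm _ _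
    calc Real.exp (-β * c - κ) ≤ (π A).toReal * Real.exp (-β * c) := h4
      _ = ∫ θ in A, Real.exp (-β * c) ∂π := by rw [h3, smul_eq_mul]
      _ ≤ ∫ θ in A, f θ ∂π := h1
      _ ≤ I := h2
  have hIpos : 0 < I := lt_of_lt_of_le (Real.exp_pos _) hIlow
  -- Z = ofReal I
  have hZ : (∫⁻ θ, ENNReal.ofReal (f θ) ∂π) = ENNReal.ofReal I :=
    (ofReal_integral_eq_lintegral_ofReal hfint (ae_of_all _ fun θ => (hf0 θ).le)).symm
  have hgibbs : gibbs π β L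
      = (ENNReal.ofReal I)⁻¹ • π.withDensity fun θ => ENNReal.ofReal (f θ) := by
    rw [gibbs, hZ]
  -- probability measure
  have hprob : IsProbabilityMeasure (gibbs π β L) := by
    constructor
    rw [hgibbs, Measure.smul_apply, withDensity_apply _ MeasurableSet.univ,
      Measure.restrict_univ, ← hZ, smul_eq_mul]
    exact ENNReal.inv_mul_cancel (by rw [hZ]; exact (ENNReal.ofReal_pos.2 hIpos).ne') (by rw [hZ]; exact ENNReal.ofReal_ne_top)
  refine ⟨hprob, ?_⟩
  -- compute the integral
  have hwd : (π.withDensity fun θ => ENNReal.ofReal (f θ))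
      = π.withDensity fun θ => ((f θ).toNNReal : ℝ≥0∞) := rfl
  have hLint : Integrable (fun θ => f θ * L θ) π := by
    refine (integrable_const C).mono' ((hfm.mul hLmeas).aestronglyMeasurable) (ae_of_all _ fun θ => ?_)
    rw [Real.norm_eq_abs, abs_of_nonneg (mul_nonneg (hf0 θ).le (hL0 θ))]
    calc f θ * L θ ≤ 1 * L θ := mul_le_mul_of_nonneg_right (hf1 θ) (hL0 θ)
      _ = L θ := one_mul _
      _ ≤ C := hLC θ
  have hint1 : ∫ θ, L θ ∂(gibbs π β L) = I⁻¹ * ∫ θ, f θ * L θ ∂π := by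
    rw [hgibbs, integral_smul_measure, hwd,
      integral_withDensity_eq_integral_smul hfm.real_toNNReal]
    congr 1
    · rw [ENNReal.toReal_inv, ENNReal.toReal_ofReal hIpos.le]
    · exact integral_congr_ae (ae_of_all _ fun θ => by
        simp [NNReal.smul_def, Real.coe_toNNReal _ (hf0 θ).le])
  -- Jensen: I log I ≤ ∫ f log f = -β ∫ f L
  have hφint : Integrable (fun θ => f θ * Real.log (f θ)) π := by
    have : (fun θ => f θ * Real.log (f θ)) = fun θ => -β * (f θ * L θ) := by
      funext θ; rw [hf]; simp [Real.log_exp]; ring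
    rw [this]; exact hLint.const_mul _
  have hjensen : I * Real.log I ≤ ∫ θ, f θ * Real.log (f θ) ∂π := by
    have := ConvexOn.map_average_le Real.convexOn_mul_log Real.continuous_mul_log.continuousOn
      isClosed_Ici (μ := π) (f := f) (ae_of_all _ fun θ => (hf0 θ).le) hfint hφint
    rwa [average_eq_integral, average_eq_integral] at this
  have hlog : ∫ θ, f θ * Real.log (f θ) ∂π = -β * ∫ θ, f θ * L θ ∂π := by
    rw [← integral_const_mul]
    exact integral_congr_ae (ae_of_all _ fun θ => by rw [hf]; simp [Real.log_exp]; ring)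
  have hkey : ∫ θ, f θ * L θ ∂π ≤ I * (c + κ / β) := by
    have h5 : -β * c - κ ≤ Real.log I := by
      calc -β * c - κ = Real.log (Real.exp (-β * c - κ)) := (Real.log_exp _).symm
        _ ≤ Real.log I := Real.log_le_log (Real.exp_pos _) hIlow
    have h6 : I * Real.log I ≤ -β * ∫ θ, f θ * L θ ∂π := by rw [← hlog]; exact hjensen
    have h7 : I * (-β * c - κ) ≤ I * Real.log I := mul_le_mul_of_nonneg_left h5 hIpos.le
    have heq : I * (c + κ / β) = I * (β * c + κ) / β := by rw [mul_div_assoc, add_div, mul_div_cancel_left₀ _ hβ.ne']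
    rw [heq, le_div_iff₀ hβ]
    nlinarith [h6, h7]
  rw [hint1]
  calc I⁻¹ * ∫ θ, f θ * L θ ∂π ≤ I⁻¹ * (I * (c + κ / β)) := by
        exact mul_le_mul_of_nonneg_left hkey (inv_nonneg.2 hIpos.le)
    _ = c + κ / β := by field_simp


lemma mean_sq_bound {𝕏 H Ω : Type*} [MeasurableSpace 𝕏]
    [NormedAddCommGroup H] [InnerProductSpace ℝ H] [CompleteSpace H]
    [MeasureSpace Ω] [IsProbabilityMeasure (ℙ : Measure Ω)]
    (Φ : 𝕏 → H) (hΦmeas : StronglyMeasurable Φ) (hΦbdd : ∀ x, ‖Φ x‖ ≤ 1)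
    (P0 : Measure 𝕏) [IsProbabilityMeasure P0] (μ0 : H) (hμ0 : μ0 = ∫ x, Φ x ∂P0)
    {n : ℕ} (hn : 0 < n) (X : Fin n → Ω → 𝕏) (hXmeas : ∀ i, Measurable (X i))
    (hiid : iIndepFun X ℙ)
    (hlaw : ∀ i, Measure.map (X i) ℙ = P0) :
    ∫ ω, ‖(n:ℝ)⁻¹ • ∑ i, Φ (X i ω) - μ0‖^2 ∂ℙ ≤ 1 / n := by
  have hΦint : Integrable Φ P0 :=
    (integrable_const (1:ℝ)).mono' hΦmeas.aestronglyMeasurable (ae_of_all _ hΦbdd)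
  have hμ0n : ‖μ0‖ ≤ 1 := by
    rw [hμ0]
    calc ‖∫ x, Φ x ∂P0‖ ≤ ∫ x, ‖Φ x‖ ∂P0 := norm_integral_le_integral_norm _
      _ ≤ ∫ _, (1:ℝ) ∂P0 := integral_mono hΦint.norm (integrable_const _) hΦbdd
      _ = 1 := by simp
  set Y : Fin n → Ω → H := fun i ω => Φ (X i ω) - μ0 with hY
  have hYmeas : ∀ i, StronglyMeasurable (Y i) := fun i =>
    (hΦmeas.comp_measurable (hXmeas i)).sub stronglyMeasurable_const
  have hYbdd : ∀ i ω, ‖Y i ω‖ ≤ 2 := fun i ω => by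
    calc ‖Y i ω‖ ≤ ‖Φ (X i ω)‖ + ‖μ0‖ := norm_sub_le _ _
      _ ≤ 1 + 1 := add_le_add (hΦbdd _) hμ0n
      _ = 2 := by norm_num
  have hinner_meas : ∀ i j, StronglyMeasurable fun ω => ⟪Y i ω, Y j ω⟫ := fun i j =>
    (hYmeas i).inner (hYmeas j)
  have hinner_int : ∀ i j, Integrable (fun ω => ⟪Y i ω, Y j ω⟫) ℙ := fun i j => by
    refine (integrable_const (4:ℝ)).mono' (hinner_meas i j).aestronglyMeasurable
      (ae_of_all _ fun ω => ?_)
    calc ‖⟪Y i ω, Y j ω⟫‖ ≤ ‖Y i ω‖ * ‖Y j ω‖ := norm_inner_le_norm _ _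
      _ ≤ 2 * 2 := mul_le_mul (hYbdd i ω) (hYbdd j ω) (norm_nonneg _) (by norm_num)
      _ = 4 := by norm_num
  -- diagonal terms
  have hdiag : ∀ i, ∫ ω, ⟪Y i ω, Y i ω⟫ ∂ℙ ≤ 1 := by
    intro i
    have hchg : ∫ ω, ⟪Y i ω, Y i ω⟫ ∂ℙ = ∫ x, ⟪Φ x - μ0, Φ x - μ0⟫ ∂P0 := by
      have h := integral_map (μ := ℙ) (φ := X i)
        (f := fun x => ⟪Φ x - μ0, Φ x - μ0⟫) (hXmeas i).aemeasurable
        (((hΦmeas.sub stronglyMeasurable_const).inner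
          (hΦmeas.sub stronglyMeasurable_const)).aestronglyMeasurable)
      rw [hlaw i] at h
      exact h.symm
    rw [hchg]
    have hsq : ∀ x : 𝕏, ⟪Φ x - μ0, Φ x - μ0⟫ = ‖Φ x‖^2 - 2 * ⟪μ0, Φ x⟫ + ‖μ0‖^2 := by
      intro x
      rw [real_inner_self_eq_norm_sq, norm_sub_sq_real]
      rw [real_inner_comm]
    have hnint : Integrable (fun x => ‖Φ x‖^2) P0 := by
      refine (integrable_const (1:ℝ)).mono' ((hΦmeas.norm.pow 2).aestronglyMeasurable)
        (ae_of_all _ fun x => ?_)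
      rw [Real.norm_eq_abs, abs_of_nonneg (by positivity)]
      nlinarith [hΦbdd x, norm_nonneg (Φ x)]
    have hiint : Integrable (fun x => ⟪μ0, Φ x⟫) P0 := by
      refine (integrable_const (‖μ0‖ * 1)).mono'
        ((stronglyMeasurable_const.inner hΦmeas).aestronglyMeasurable) (ae_of_all _ fun x => ?_)
      calc ‖⟪μ0, Φ x⟫‖ ≤ ‖μ0‖ * ‖Φ x‖ := norm_inner_le_norm _ _
        _ ≤ ‖μ0‖ * 1 := mul_le_mul_of_nonneg_left (hΦbdd x) (norm_nonneg _)
    have hii : ∫ x, ⟪μ0, Φ x⟫ ∂P0 = ‖μ0‖^2 := by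
      rw [integral_inner hΦint, ← hμ0, real_inner_self_eq_norm_sq]
    calc ∫ x, ⟪Φ x - μ0, Φ x - μ0⟫ ∂P0
        = ∫ x, (‖Φ x‖^2 - 2 * ⟪μ0, Φ x⟫ + ‖μ0‖^2) ∂P0 := by
          exact integral_congr_ae (ae_of_all _ hsq)
      _ = (∫ x, (‖Φ x‖^2 - 2 * ⟪μ0, Φ x⟫) ∂P0) + ‖μ0‖^2 := by
          have hsubint : Integrable (fun x : 𝕏 => ‖Φ x‖^2 - 2 * ⟪μ0, Φ x⟫) P0 :=
            hnint.sub (hiint.const_mul 2)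
          rw [integral_add hsubint (integrable_const _)]
          simp
      _ = (∫ x, ‖Φ x‖^2 ∂P0) - 2 * ∫ x, ⟪μ0, Φ x⟫ ∂P0 + ‖μ0‖^2 := by
          rw [integral_sub hnint (hiint.const_mul 2), integral_const_mul]
      _ ≤ 1 - 2 * ‖μ0‖^2 + ‖μ0‖^2 := by
          rw [hii]
          have : ∫ x, ‖Φ x‖^2 ∂P0 ≤ 1 := by
            calc ∫ x, ‖Φ x‖^2 ∂P0 ≤ ∫ _, (1:ℝ) ∂P0 := by
                  refine integral_mono hnint (integrable_const _) (fun x => ?_)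
                  nlinarith [hΦbdd x, norm_nonneg (Φ x)]
              _ = 1 := by simp
          linarith
      _ ≤ 1 := by nlinarith [norm_nonneg μ0]
  -- off-diagonal terms
  have hoff : ∀ i j, i ≠ j → ∫ ω, ⟪Y i ω, Y j ω⟫ ∂ℙ = 0 := by
    intro i j hij
    have hpair : Measure.map (fun ω => (X i ω, X j ω)) ℙ = P0.prod P0 := by
      have h := (indepFun_iff_map_prod_eq_prod_map_map (hXmeas i).aemeasurable
        (hXmeas j).aemeasurable).1 (hiid.indepFun hij)
      rw [hlaw i, hlaw j] at h
      exact h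
    set F : 𝕏 × 𝕏 → ℝ := fun p => ⟪Φ p.1 - μ0, Φ p.2 - μ0⟫ with hF
    have hFmeas : StronglyMeasurable F :=
      ((hΦmeas.comp_measurable measurable_fst).sub stronglyMeasurable_const).inner
        ((hΦmeas.comp_measurable measurable_snd).sub stronglyMeasurable_const)
    have hFint : Integrable F (P0.prod P0) := by
      refine (integrable_const (4:ℝ)).mono' hFmeas.aestronglyMeasurable (ae_of_all _ fun p => ?_)
      have h1 : ‖Φ p.1 - μ0‖ ≤ 2 := by
        calc ‖Φ p.1 - μ0‖ ≤ ‖Φ p.1‖ + ‖μ0‖ := norm_sub_le _ _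
          _ ≤ 2 := by linarith [hΦbdd p.1]
      have h2 : ‖Φ p.2 - μ0‖ ≤ 2 := by
        calc ‖Φ p.2 - μ0‖ ≤ ‖Φ p.2‖ + ‖μ0‖ := norm_sub_le _ _
          _ ≤ 2 := by linarith [hΦbdd p.2]
      calc ‖F p‖ ≤ ‖Φ p.1 - μ0‖ * ‖Φ p.2 - μ0‖ := norm_inner_le_norm _ _
        _ ≤ 2 * 2 := mul_le_mul h1 h2 (norm_nonneg _) (by norm_num)
        _ = 4 := by norm_num
    have hzero : ∫ y, Φ y - μ0 ∂P0 = 0 := by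
      have hI2 : Integrable (fun y : 𝕏 => Φ y - μ0) P0 := hΦint.sub (integrable_const _)
      rw [integral_sub hΦint (integrable_const _), integral_const, ← hμ0]
      simp
    calc ∫ ω, ⟪Y i ω, Y j ω⟫ ∂ℙ
        = ∫ p, F p ∂(P0.prod P0) := by
          have h := integral_map (μ := ℙ) (φ := fun ω => (X i ω, X j ω)) (f := F)
            ((hXmeas i).prodMk (hXmeas j)).aemeasurable hFmeas.aestronglyMeasurable
          rw [hpair] at h
          exact h.symm
      _ = ∫ x, ∫ y, F (x, y) ∂P0 ∂P0 := integral_prod F hFint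
      _ = ∫ x, (0:ℝ) ∂P0 := by
          refine integral_congr_ae (ae_of_all _ fun x => ?_)
          have hI2 : Integrable (fun y : 𝕏 => Φ y - μ0) P0 := hΦint.sub (integrable_const _)
          calc (∫ y, F (x, y) ∂P0) = ⟪Φ x - μ0, ∫ y, (Φ y - μ0) ∂P0⟫ :=
                integral_inner hI2 (Φ x - μ0)
            _ = 0 := by rw [hzero, inner_zero_right]
      _ = 0 := by simp
  have hn0 : (n:ℝ) ≠ 0 := Nat.cast_ne_zero.2 hn.ne'
  have hrw : ∀ ω, (n:ℝ)⁻¹ • ∑ i, Φ (X i ω) - μ0 = (n:ℝ)⁻¹ • ∑ i, Y i ω := by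
    intro ω
    rw [hY]
    rw [Finset.sum_sub_distrib, smul_sub, Finset.sum_const, Finset.card_univ, Fintype.card_fin,
      ← Nat.cast_smul_eq_nsmul ℝ, smul_smul, inv_mul_cancel₀ hn0, one_smul]
  have hnorm : ∀ ω, ‖(n:ℝ)⁻¹ • ∑ i, Φ (X i ω) - μ0‖^2
      = ((n:ℝ)⁻¹)^2 * ‖∑ i, Y i ω‖^2 := by
    intro ω
    rw [hrw ω, norm_smul, mul_pow, Real.norm_eq_abs, abs_of_nonneg (by positivity)]
  have hsum : ∀ ω, ‖∑ i, Y i ω‖^2 = ∑ i, ∑ j, ⟪Y i ω, Y j ω⟫ := by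
    intro ω
    rw [← real_inner_self_eq_norm_sq, sum_inner]
    exact Finset.sum_congr rfl fun i _ => inner_sum _ _ _
  have hint : ∫ ω, ‖∑ i, Y i ω‖^2 ∂ℙ = ∑ i, ∑ j, ∫ ω, ⟪Y i ω, Y j ω⟫ ∂ℙ := by
    simp_rw [hsum]
    rw [integral_finset_sum _ (fun i _ => integrable_finset_sum _ (fun j _ => hinner_int i j))]
    exact Finset.sum_congr rfl fun i _ => integral_finset_sum _ (fun j _ => hinner_int i j)
  have hbound : ∫ ω, ‖∑ i, Y i ω‖^2 ∂ℙ ≤ (n:ℝ) := by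
    rw [hint]
    have hrow : ∀ i : Fin n, ∑ j, ∫ ω, ⟪Y i ω, Y j ω⟫ ∂ℙ = ∫ ω, ⟪Y i ω, Y i ω⟫ ∂ℙ := by
      intro i
      exact Finset.sum_eq_single i (fun j _ hj => hoff i j (Ne.symm hj)) (by simp)
    calc ∑ i, ∑ j, ∫ ω, ⟪Y i ω, Y j ω⟫ ∂ℙ = ∑ i : Fin n, ∫ ω, ⟪Y i ω, Y i ω⟫ ∂ℙ :=
          Finset.sum_congr rfl fun i _ => hrow i
      _ ≤ ∑ _i : Fin n, (1:ℝ) := Finset.sum_le_sum fun i _ => hdiag i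
      _ = (n:ℝ) := by simp
  calc ∫ ω, ‖(n:ℝ)⁻¹ • ∑ i, Φ (X i ω) - μ0‖^2 ∂ℙ
      = ((n:ℝ)⁻¹)^2 * ∫ ω, ‖∑ i, Y i ω‖^2 ∂ℙ := by
        simp_rw [hnorm]; rw [integral_const_mul]
    _ ≤ ((n:ℝ)⁻¹)^2 * (n:ℝ) := mul_le_mul_of_nonneg_left hbound (by positivity)
    _ = 1 / n := by field_simp



set_option maxHeartbeats 1000000 in
/-- Robust generalization bound for the MMD-Bayes posterior.  The MMD is expressed via
the kernel mean embedding: `Φ` is the feature map of a kernel bounded by 1,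
`m θ = μ_{P_θ}`, `μ0 = μ_{P₀}`, and the embedding of the empirical measure of the
i.i.d. sample `X₁,…,Xₙ ∼ P₀` is `(1/n)∑ᵢ Φ(Xᵢ)`.  Under the prior mass condition
`π{θ : D_k(P_θ,P_{θ*}) ≤ n^{-1/2}} ≥ e^{−β/n}`, where `θ*` minimizes
`D_k(P_θ,P₀)`, the expected posterior risk satisfies
`E[∫ D_k²(P_θ,P₀) π_n^β(dθ)] ≤ 8 inf_θ D_k²(P_θ,P₀) + 16/n`. -/
theorem stmt_10 {𝕏 H Θ Ω : Type*} [MeasurableSpace 𝕏]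
    [NormedAddCommGroup H] [InnerProductSpace ℝ H] [CompleteSpace H]
    [MeasurableSpace Θ] [MeasureSpace Ω] [IsProbabilityMeasure (ℙ : Measure Ω)]
    (Φ : 𝕏 → H) (hΦmeas : StronglyMeasurable Φ) (hΦbdd : ∀ x, ‖Φ x‖ ≤ 1)
    (P : Θ → Measure 𝕏) (hP : ∀ θ, IsProbabilityMeasure (P θ))
    (m : Θ → H) (hm : ∀ θ, m θ = ∫ x, Φ x ∂(P θ)) (hmmeas : StronglyMeasurable m)
    (P0 : Measure 𝕏) [IsProbabilityMeasure P0] (μ0 : H) (hμ0 : μ0 = ∫ x, Φ x ∂P0)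
    {n : ℕ} (hn : 0 < n) (X : Fin n → Ω → 𝕏) (hXmeas : ∀ i, Measurable (X i))
    (hiid : iIndepFun X ℙ)
    (hlaw : ∀ i, Measure.map (X i) ℙ = P0)
    (π : Measure Θ) [IsProbabilityMeasure π] (β : ℝ) (hβ : 0 < β)
    (θs : Θ) (hθs : ∀ θ, ‖m θs - μ0‖ ≤ ‖m θ - μ0‖)
    (hmass : ENNReal.ofReal (Real.exp (-β / n))
      ≤ π {θ | ‖m θ - m θs‖ ≤ 1 / Real.sqrt n}) :
    (∫ ω, ∫ θ, ‖m θ - μ0‖ ^ 2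
        ∂(gibbs π β fun θ => ‖m θ - (n : ℝ)⁻¹ • ∑ i, Φ (X i ω)‖ ^ 2) ∂ℙ)
      ≤ 8 * (⨅ θ, ‖m θ - μ0‖ ^ 2) + 16 / n := by
  have hnpos : (0:ℝ) < n := Nat.cast_pos.2 hn
  haveI : Nonempty Θ := ⟨θs⟩
  have hn0 : (n:ℝ) ≠ 0 := hnpos.ne'
  -- basic norm bounds
  have hnorm_int : ∀ (Q : Measure 𝕏), IsProbabilityMeasure Q → ‖∫ x, Φ x ∂Q‖ ≤ 1 := by
    intro Q hQ
    have hint : Integrable Φ Q :=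
      (integrable_const (1:ℝ)).mono' hΦmeas.aestronglyMeasurable (ae_of_all _ hΦbdd)
    calc ‖∫ x, Φ x ∂Q‖ ≤ ∫ x, ‖Φ x‖ ∂Q := norm_integral_le_integral_norm _
      _ ≤ ∫ _, (1:ℝ) ∂Q := integral_mono hint.norm (integrable_const _) hΦbdd
      _ = 1 := by simp
  have hmn : ∀ θ, ‖m θ‖ ≤ 1 := fun θ => by rw [hm θ]; exact hnorm_int _ (hP θ)
  have hμ0n : ‖μ0‖ ≤ 1 := by rw [hμ0]; exact hnorm_int _ inferInstance
  set μh : Ω → H := fun ω => (n:ℝ)⁻¹ • ∑ i, Φ (X i ω) with hμh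
  have hμhn : ∀ ω, ‖μh ω‖ ≤ 1 := by
    intro ω
    rw [hμh]
    calc ‖(n:ℝ)⁻¹ • ∑ i, Φ (X i ω)‖ = (n:ℝ)⁻¹ * ‖∑ i, Φ (X i ω)‖ := by
          rw [norm_smul, Real.norm_eq_abs, abs_of_nonneg (by positivity)]
      _ ≤ (n:ℝ)⁻¹ * (n:ℝ) := by
          refine mul_le_mul_of_nonneg_left ?_ (by positivity)
          calc ‖∑ i, Φ (X i ω)‖ ≤ ∑ i : Fin n, ‖Φ (X i ω)‖ := norm_sum_le _ _
            _ ≤ ∑ _i : Fin n, (1:ℝ) := Finset.sum_le_sum fun i _ => hΦbdd _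
            _ = (n:ℝ) := by simp
      _ = 1 := inv_mul_cancel₀ hn0
  set e : Ω → ℝ := fun ω => ‖μh ω - μ0‖^2 with he
  have he_bound : ∫ ω, e ω ∂ℙ ≤ 1 / n :=
    mean_sq_bound Φ hΦmeas hΦbdd P0 μ0 hμ0 hn X hXmeas hiid hlaw
  have hμh_meas : StronglyMeasurable μh := by
    apply StronglyMeasurable.const_smul
    exact Finset.stronglyMeasurable_fun_sum _ fun i _ => hΦmeas.comp_measurable (hXmeas i)
  have he_meas : StronglyMeasurable e :=
    ((hμh_meas.sub stronglyMeasurable_const).norm.measurable.pow_const 2).stronglyMeasurable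
  have he_int : Integrable e ℙ := by
    refine (integrable_const (4:ℝ)).mono' he_meas.aestronglyMeasurable (ae_of_all _ fun ω => ?_)
    rw [Real.norm_eq_abs, abs_of_nonneg (by positivity)]
    have h1 : ‖μh ω - μ0‖ ≤ 2 := by
      calc ‖μh ω - μ0‖ ≤ ‖μh ω‖ + ‖μ0‖ := norm_sub_le _ _
        _ ≤ 2 := by linarith [hμhn ω]
    show ‖μh ω - μ0‖^2 ≤ 4
    nlinarith [norm_nonneg (μh ω - μ0)]
  set Ds : ℝ := ‖m θs - μ0‖ with hDs
  -- pointwise (in ω) bound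
  have hpt : ∀ ω, (∫ θ, ‖m θ - μ0‖ ^ 2
      ∂(gibbs π β fun θ => ‖m θ - (n : ℝ)⁻¹ • ∑ i, Φ (X i ω)‖ ^ 2))
      ≤ (8 * Ds^2 + 6 / n) + 10 * e ω := by
    intro ω
    set L : Θ → ℝ := fun θ => ‖m θ - (n : ℝ)⁻¹ • ∑ i, Φ (X i ω)‖ ^ 2 with hL
    have hLμh : ∀ θ, L θ = ‖m θ - μh ω‖^2 := fun θ => rfl
    have hLmeas : Measurable L :=
      ((hmmeas.sub stronglyMeasurable_const).norm.measurable.pow_const 2)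
    have hL0 : ∀ θ, 0 ≤ L θ := fun θ => by rw [hLμh]; positivity
    have hL4 : ∀ θ, L θ ≤ 4 := by
      intro θ
      rw [hLμh]
      have h1 : ‖m θ - μh ω‖ ≤ 2 := by
        calc ‖m θ - μh ω‖ ≤ ‖m θ‖ + ‖μh ω‖ := norm_sub_le _ _
          _ ≤ 2 := by linarith [hmn θ, hμhn ω]
      nlinarith [norm_nonneg (m θ - μh ω)]
    set b : ℝ := ‖m θs - μh ω‖ with hb
    set c : ℝ := (1 / Real.sqrt n + b)^2 with hc
    have hc0 : 0 ≤ c := by positivity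
    have hA : MeasurableSet {θ | ‖m θ - m θs‖ ≤ 1 / Real.sqrt n} :=
      measurableSet_le (hmmeas.sub stronglyMeasurable_const).norm.measurable measurable_const
    have hLA : ∀ θ ∈ {θ | ‖m θ - m θs‖ ≤ 1 / Real.sqrt n}, L θ ≤ c := by
      intro θ hθ
      rw [hLμh, hc]
      have h1 : ‖m θ - μh ω‖ ≤ 1 / Real.sqrt n + b := by
        calc ‖m θ - μh ω‖ ≤ ‖m θ - m θs‖ + ‖m θs - μh ω‖ := norm_sub_le_norm_sub_add_norm_sub _ _ _
          _ ≤ 1 / Real.sqrt n + b := by exact add_le_add hθ le_rfl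
      nlinarith [norm_nonneg (m θ - μh ω), Real.sqrt_nonneg (n:ℝ), norm_nonneg (m θs - μh ω)]
    have hmass' : ENNReal.ofReal (Real.exp (-(β / n)))
        ≤ π {θ | ‖m θ - m θs‖ ≤ 1 / Real.sqrt n} := by
      rwa [← neg_div]
    obtain ⟨hprob, hGle⟩ := gibbs_prob_and_int π hβ hc0 (le_of_lt (by positivity : (0:ℝ) < β / n))
      hLmeas hL0 hL4 hA hLA hmass'
    haveI := hprob
    have hκβ : (β / n) / β = 1 / n := by
      rw [div_div, mul_comm, ← div_div, div_self hβ.ne']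
    rw [hκβ] at hGle
    -- integrability of L wrt the Gibbs measure
    have hLint : Integrable L (gibbs π β L) := by
      refine (integrable_const (4:ℝ)).mono' hLmeas.stronglyMeasurable.aestronglyMeasurable
        (ae_of_all _ fun θ => ?_)
      rw [Real.norm_eq_abs, abs_of_nonneg (hL0 θ)]
      exact hL4 θ
    have hmono : (∫ θ, ‖m θ - μ0‖ ^ 2 ∂(gibbs π β L))
        ≤ ∫ θ, (2 * L θ + 2 * e ω) ∂(gibbs π β L) := by
      refine integral_mono_of_nonneg (ae_of_all _ fun θ => by positivity)
        ((hLint.const_mul 2).add (integrable_const _)) (ae_of_all _ fun θ => ?_)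
      have h1 : ‖m θ - μ0‖ ≤ ‖m θ - μh ω‖ + ‖μh ω - μ0‖ :=
        norm_sub_le_norm_sub_add_norm_sub _ _ _
      show ‖m θ - μ0‖ ^ 2 ≤ 2 * ‖m θ - μh ω‖^2 + 2 * ‖μh ω - μ0‖^2
      have h2 : ‖m θ - μ0‖^2 ≤ (‖m θ - μh ω‖ + ‖μh ω - μ0‖)^2 :=
        pow_le_pow_left₀ (norm_nonneg _) h1 2
      nlinarith [sq_nonneg (‖m θ - μh ω‖ - ‖μh ω - μ0‖)]
    have heq2 : ∫ θ, (2 * L θ + 2 * e ω) ∂(gibbs π β L)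
        = 2 * (∫ θ, L θ ∂(gibbs π β L)) + 2 * e ω := by
      rw [integral_add (hLint.const_mul 2) (integrable_const _), integral_const_mul,
        integral_const]
      simp
    -- bound c
    have hsq : (1 / Real.sqrt n)^2 = 1 / n := by
      rw [div_pow, one_pow, Real.sq_sqrt hnpos.le]
    have hbb : b ≤ Ds + ‖μh ω - μ0‖ := by
      calc b ≤ ‖m θs - μ0‖ + ‖μ0 - μh ω‖ := norm_sub_le_norm_sub_add_norm_sub _ _ _
        _ = Ds + ‖μh ω - μ0‖ := by rw [norm_sub_rev μ0]
    have hcb : c ≤ 2 / n + 4 * Ds^2 + 4 * e ω := by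
      rw [hc]
      have hb2 : b^2 ≤ 2 * Ds^2 + 2 * e ω := by
        have h2 : e ω = ‖μh ω - μ0‖^2 := rfl
        rw [h2]
        nlinarith [hbb, norm_nonneg (m θs - μh ω), norm_nonneg (μh ω - μ0),
          norm_nonneg (m θs - μ0), sq_nonneg (Ds - ‖μh ω - μ0‖)]
      have hexp : (1 / Real.sqrt n + b)^2 ≤ 2 * (1 / Real.sqrt n)^2 + 2 * b^2 := by
        nlinarith [sq_nonneg (1 / Real.sqrt n - b)]
      rw [hsq] at hexp
      have : (2:ℝ) * (1/n) = 2/n := by ring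
      linarith
    calc (∫ θ, ‖m θ - μ0‖ ^ 2 ∂(gibbs π β L))
        ≤ 2 * (∫ θ, L θ ∂(gibbs π β L)) + 2 * e ω := by rw [← heq2]; exact hmono
      _ ≤ 2 * (c + 1/n) + 2 * e ω := by
          have h0 : 0 ≤ e ω := by positivity
          linarith [hGle]
      _ ≤ 2 * ((2 / n + 4 * Ds^2 + 4 * e ω) + 1/n) + 2 * e ω := by linarith
      _ = (8 * Ds^2 + 6 / n) + 10 * e ω := by ring
  -- integrate over ω
  have hfinal : (∫ ω, ∫ θ, ‖m θ - μ0‖ ^ 2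
      ∂(gibbs π β fun θ => ‖m θ - (n : ℝ)⁻¹ • ∑ i, Φ (X i ω)‖ ^ 2) ∂ℙ)
      ≤ ∫ ω, ((8 * Ds^2 + 6 / n) + 10 * e ω) ∂ℙ := by
    refine integral_mono_of_nonneg (ae_of_all _ fun ω => ?_)
      ((integrable_const _).add (he_int.const_mul 10)) (ae_of_all _ fun ω => hpt ω)
    exact integral_nonneg fun θ => by positivity
  have hrhs : ∫ ω, ((8 * Ds^2 + 6 / n) + 10 * e ω) ∂ℙ
      = (8 * Ds^2 + 6 / n) + 10 * ∫ ω, e ω ∂ℙ := by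
    rw [integral_add (integrable_const _) (he_int.const_mul 10), integral_const,
      integral_const_mul]
    simp
  have hinf : Ds^2 ≤ ⨅ θ, ‖m θ - μ0‖ ^ 2 := by
    refine le_ciInf fun θ => ?_
    have h1 := hθs θ
    nlinarith [norm_nonneg (m θs - μ0), norm_nonneg (m θ - μ0)]
  calc (∫ ω, ∫ θ, ‖m θ - μ0‖ ^ 2
      ∂(gibbs π β fun θ => ‖m θ - (n : ℝ)⁻¹ • ∑ i, Φ (X i ω)‖ ^ 2) ∂ℙ)
      ≤ (8 * Ds^2 + 6 / n) + 10 * ∫ ω, e ω ∂ℙ := by rw [← hrhs]; exact hfinal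
    _ ≤ (8 * Ds^2 + 6 / n) + 10 * (1/n) := by
        have := he_bound
        linarith
    _ ≤ 8 * (⨅ θ, ‖m θ - μ0‖ ^ 2) + 16 / n := by
        have h1 : 6 / (n:ℝ) + 10 * (1/n) = 16 / n := by ring
        linarith [hinf]
end

section
/- Under the well-specified setting P₀ = P_{θ*} and the prior mass condition π({θ : D_k(P_θ,P_{θ*}) ≤ n^{−1/2}}) ≥ e^{−β/n}, the MMD-Bayes posterior satisfies E[∫ D_k(P_θ,P₀) π_n^β(dθ)] ≤ 4/√n. Consequently, for any sequence Mₙ → ∞, the posterior mass π_n^β({θ : D_k(P_θ,P₀) > Mₙ·n^{−1/2}}) converges to 0 in probability (indeed in L¹). -/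
open MeasureTheory ProbabilityTheory Filter

open scoped ENNReal NNReal RealInnerProductSpace

section AuxLemmas

lemma aux_integrable_of_bounded {α E : Type*} [MeasurableSpace α] [NormedAddCommGroup E]
    {μ : Measure α} [IsFiniteMeasure μ] {f : α → E} (hf : AEStronglyMeasurable f μ)
    {C : ℝ} (hC : ∀ a, ‖f a‖ ≤ C) : Integrable f μ :=
  (integrable_const C).mono' hf (Filter.Eventually.of_forall hC)

lemma aux_exp_jensen {α : Type*} [MeasurableSpace α] (μ : Measure α) [IsProbabilityMeasure μ]
    (g : α → ℝ) (hg : Integrable g μ) (hg2 : Integrable (fun a => Real.exp (g a)) μ) :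
    Real.exp (∫ a, g a ∂μ) ≤ ∫ a, Real.exp (g a) ∂μ := by
  have h := convexOn_exp.map_average_le Real.continuous_exp.continuousOn isClosed_univ
    (Filter.Eventually.of_forall fun x => Set.mem_univ _) hg hg2
  simpa [average_eq_integral] using h

lemma aux_sq_jensen {α : Type*} [MeasurableSpace α] (μ : Measure α) [IsProbabilityMeasure μ]
    (f : α → ℝ) (hf : Integrable f μ) (hf2 : Integrable (fun a => (f a) ^ 2) μ) :
    (∫ a, f a ∂μ) ^ 2 ≤ ∫ a, (f a) ^ 2 ∂μ := by
  have h := (Even.convexOn_pow (Nat.even_iff.mpr rfl : Even 2)).map_average_le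
    (continuous_pow 2).continuousOn
    isClosed_univ (Filter.Eventually.of_forall fun x => Set.mem_univ _) hf hf2
  simpa [average_eq_integral] using h

lemma aux_sqrt_add {a b : ℝ} (ha : 0 ≤ a) (hb : 0 ≤ b) :
    Real.sqrt (a + b) ≤ Real.sqrt a + Real.sqrt b := by
  have h := Real.sqrt_le_sqrt (show a + b ≤ (Real.sqrt a + Real.sqrt b) ^ 2 by
    nlinarith [Real.sq_sqrt ha, Real.sq_sqrt hb, Real.sqrt_nonneg a, Real.sqrt_nonneg b])
  rwa [Real.sqrt_sq (by positivity)] at h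

lemma aux_norm_integral_le_one {𝕏 H : Type*} [MeasurableSpace 𝕏] [NormedAddCommGroup H]
    [NormedSpace ℝ H] (Φ : 𝕏 → H) (hΦbdd : ∀ x, ‖Φ x‖ ≤ 1)
    (μ : Measure 𝕏) [IsProbabilityMeasure μ] : ‖∫ x, Φ x ∂μ‖ ≤ 1 := by
  have h := norm_integral_le_of_norm_le_const (μ := μ) (f := Φ) (C := 1)
    (Filter.Eventually.of_forall hΦbdd)
  simpa using h

end AuxLemmas

section GibbsLemmas

lemma gibbs_key {Θ : Type*} [MeasurableSpace Θ] (π : Measure Θ)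
    [IsProbabilityMeasure π] (β : ℝ) (hβ : 0 < β) (L : Θ → ℝ)
    (hLm : StronglyMeasurable L) (hL0 : ∀ θ, 0 ≤ L θ) (C : ℝ) (hLb : ∀ θ, L θ ≤ C)
    (A : Set Θ) (hA : MeasurableSet A) (c p : ℝ) (hc : 0 ≤ c) (hp : 0 ≤ p)
    (hAc : ∀ θ ∈ A, L θ ≤ c)
    (hmass : ENNReal.ofReal (Real.exp (-β * p)) ≤ π A) :
    IsProbabilityMeasure (gibbs π β L) ∧ ∫ θ, L θ ∂(gibbs π β L) ≤ c + p := by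
  have hfm : Measurable fun θ => ENNReal.ofReal (Real.exp (-β * L θ)) :=
    ENNReal.measurable_ofReal.comp (Real.measurable_exp.comp (hLm.measurable.const_mul (-β)))
  set Z : ℝ≥0∞ := ∫⁻ θ, ENNReal.ofReal (Real.exp (-β * L θ)) ∂π with hZdef
  have hZ1 : Z ≤ 1 := by
    calc Z ≤ ∫⁻ _, 1 ∂π := lintegral_mono fun θ =>
          ENNReal.ofReal_le_one.2 (Real.exp_le_one_iff.2 (by nlinarith [hL0 θ]))
      _ = 1 := by simp
  have hZlb : ENNReal.ofReal (Real.exp (-β * (c + p))) ≤ Z := by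
    have h1 : ENNReal.ofReal (Real.exp (-β * c)) * π A ≤ Z := by
      calc ENNReal.ofReal (Real.exp (-β * c)) * π A
          = ∫⁻ _ in A, ENNReal.ofReal (Real.exp (-β * c)) ∂π := (setLIntegral_const A _).symm
        _ ≤ ∫⁻ θ in A, ENNReal.ofReal (Real.exp (-β * L θ)) ∂π := by
            refine setLIntegral_mono hfm fun θ hθ => ?_
            exact ENNReal.ofReal_le_ofReal (Real.exp_le_exp.2 (by nlinarith [hAc θ hθ]))
        _ ≤ Z := setLIntegral_le_lintegral A _
    calc ENNReal.ofReal (Real.exp (-β * (c + p)))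
        = ENNReal.ofReal (Real.exp (-β * c)) * ENNReal.ofReal (Real.exp (-β * p)) := by
          rw [← ENNReal.ofReal_mul (Real.exp_nonneg _), ← Real.exp_add]; ring_nf
      _ ≤ ENNReal.ofReal (Real.exp (-β * c)) * π A := mul_le_mul_right hmass _
      _ ≤ Z := h1
  have hZ0 : Z ≠ 0 := by
    intro h
    rw [h, le_zero_iff, ENNReal.ofReal_eq_zero] at hZlb
    exact (Real.exp_pos _).not_ge hZlb
  have hZtop : Z ≠ ⊤ := (lt_of_le_of_lt hZ1 ENNReal.one_lt_top).ne
  have hgibbs : IsProbabilityMeasure (gibbs π β L) := by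
    constructor
    rw [gibbs, Measure.smul_apply, withDensity_apply _ MeasurableSet.univ,
      Measure.restrict_univ, smul_eq_mul, ← hZdef]
    exact ENNReal.inv_mul_cancel hZ0 hZtop
  have hint : ∀ h : Θ → ℝ, ∫ θ, h θ ∂(gibbs π β L) =
      Z⁻¹.toReal * ∫ θ, Real.exp (-β * L θ) * h θ ∂π := by
    intro h
    rw [gibbs, ← hZdef, integral_smul_measure]
    have hnn : Measurable fun θ => (Real.exp (-β * L θ)).toNNReal :=
      (Real.measurable_exp.comp (hLm.measurable.const_mul (-β))).real_toNNReal
    have heq : (fun θ => ENNReal.ofReal (Real.exp (-β * L θ)))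
        = fun θ => ((Real.exp (-β * L θ)).toNNReal : ℝ≥0∞) := rfl
    rw [heq, integral_withDensity_eq_integral_smul hnn h, smul_eq_mul]
    congr 1
    refine integral_congr_ae (Filter.Eventually.of_forall fun θ => ?_)
    simp only [NNReal.smul_def, Real.coe_toNNReal _ (Real.exp_nonneg _), smul_eq_mul]
  have hI : ∫ θ, Real.exp (β * L θ) ∂(gibbs π β L) = Z⁻¹.toReal := by
    rw [hint]
    have h1 : (fun θ => Real.exp (-β * L θ) * Real.exp (β * L θ)) = fun _ => (1 : ℝ) := by
      funext θ; rw [← Real.exp_add]; ring_nf; exact Real.exp_zero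
    rw [h1, integral_const, probReal_univ]; simp
  have hinv : Z⁻¹.toReal ≤ Real.exp (β * (c + p)) := by
    have h1 : Z⁻¹ ≤ ENNReal.ofReal (Real.exp (β * (c + p))) := by
      have h2 : Z⁻¹ ≤ (ENNReal.ofReal (Real.exp (-β * (c + p))))⁻¹ :=
        ENNReal.inv_le_inv' hZlb
      rwa [← ENNReal.ofReal_inv_of_pos (Real.exp_pos _), ← Real.exp_neg, neg_mul,
        neg_neg] at h2
    calc Z⁻¹.toReal ≤ (ENNReal.ofReal (Real.exp (β * (c + p)))).toReal :=
        ENNReal.toReal_mono ENNReal.ofReal_ne_top h1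
      _ = Real.exp (β * (c + p)) := ENNReal.toReal_ofReal (Real.exp_nonneg _)
  haveI := hgibbs
  have hgL_int : Integrable (fun θ => β * L θ) (gibbs π β L) :=
    aux_integrable_of_bounded (hLm.const_mul β).aestronglyMeasurable
      (C := β * C) fun θ => by
        rw [Real.norm_eq_abs, abs_of_nonneg (by nlinarith [hL0 θ])]
        nlinarith [hLb θ]
  have hexp_int : Integrable (fun θ => Real.exp (β * L θ)) (gibbs π β L) :=
    aux_integrable_of_bounded
      ((Real.continuous_exp.comp_stronglyMeasurable (hLm.const_mul β)).aestronglyMeasurable)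
      (C := Real.exp (β * C)) fun θ => by
        rw [Real.norm_eq_abs, abs_of_nonneg (Real.exp_nonneg _)]
        exact Real.exp_le_exp.2 (by nlinarith [hLb θ])
  have hjen := aux_exp_jensen (gibbs π β L) (fun θ => β * L θ) hgL_int hexp_int
  rw [hI] at hjen
  have hfin : ∫ θ, β * L θ ∂(gibbs π β L) ≤ β * (c + p) :=
    Real.exp_le_exp.1 (hjen.trans hinv)
  rw [integral_const_mul] at hfin
  exact ⟨hgibbs, le_of_mul_le_mul_left hfin hβ⟩

lemma gibbs_mmd_bound {Θ H : Type*} [MeasurableSpace Θ] [NormedAddCommGroup H]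
    (π : Measure Θ) [IsProbabilityMeasure π] (β : ℝ) (hβ : 0 < β)
    (m : Θ → H) (hmmeas : StronglyMeasurable m) (hmbdd : ∀ θ, ‖m θ‖ ≤ 1)
    (μ0 : H) (θs : Θ) (hθs : m θs = μ0)
    (μh : H) (hμh : ‖μh‖ ≤ 1) (n : ℕ) (hn : 1 ≤ n)
    (hmass : ENNReal.ofReal (Real.exp (-β / n))
      ≤ π {θ | ‖m θ - m θs‖ ≤ 1 / Real.sqrt n}) :
    IsProbabilityMeasure (gibbs π β fun θ => ‖m θ - μh‖ ^ 2) ∧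
    ∫ θ, ‖m θ - μ0‖ ∂(gibbs π β fun θ => ‖m θ - μh‖ ^ 2)
      ≤ 2 / Real.sqrt n + 2 * ‖μh - μ0‖ := by
  have hnpos : (0 : ℝ) < n := by exact_mod_cast hn
  have hs : 0 < Real.sqrt n := Real.sqrt_pos.2 hnpos
  have hμ0n : ‖μ0‖ ≤ 1 := hθs ▸ hmbdd θs
  set δ : ℝ := ‖μh - μ0‖ with hδ
  have hδ0 : 0 ≤ δ := norm_nonneg _
  have hnorm : StronglyMeasurable fun θ => ‖m θ - μh‖ :=
    (hmmeas.sub stronglyMeasurable_const).norm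
  have hLm : StronglyMeasurable fun θ => ‖m θ - μh‖ ^ 2 := by
    simp only [pow_two]; exact hnorm.mul hnorm
  have hfb : ∀ θ, ‖m θ - μh‖ ≤ 2 := fun θ => by
    calc ‖m θ - μh‖ ≤ ‖m θ‖ + ‖μh‖ := norm_sub_le _ _
      _ ≤ 2 := by linarith [hmbdd θ]
  have hL4 : ∀ θ, ‖m θ - μh‖ ^ 2 ≤ 4 := fun θ => by
    nlinarith [hfb θ, norm_nonneg (m θ - μh)]
  have hA : MeasurableSet {θ | ‖m θ - m θs‖ ≤ 1 / Real.sqrt n} :=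
    (hmmeas.sub stronglyMeasurable_const).norm.measurable measurableSet_Iic
  have hAc : ∀ θ ∈ {θ | ‖m θ - m θs‖ ≤ 1 / Real.sqrt n},
      ‖m θ - μh‖ ^ 2 ≤ (1 / Real.sqrt n + δ) ^ 2 := by
    intro θ hθ
    have h1 : ‖m θ - μh‖ ≤ 1 / Real.sqrt n + δ := by
      calc ‖m θ - μh‖ ≤ ‖m θ - m θs‖ + ‖m θs - μh‖ := by
            rw [← sub_add_sub_cancel (m θ) (m θs) μh]; exact norm_add_le _ _
        _ ≤ 1 / Real.sqrt n + δ := by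
            have : ‖m θs - μh‖ = δ := by rw [hθs, hδ, norm_sub_rev]
            rw [this]; exact add_le_add_left hθ δ
    exact pow_le_pow_left₀ (norm_nonneg _) h1 2
  have hmass' : ENNReal.ofReal (Real.exp (-β * (1 / n)))
      ≤ π {θ | ‖m θ - m θs‖ ≤ 1 / Real.sqrt n} := by
    rwa [mul_one_div]
  obtain ⟨hprob, hL⟩ := gibbs_key π β hβ _ hLm (fun θ => sq_nonneg _) 4 hL4 _ hA
    ((1 / Real.sqrt n + δ) ^ 2) (1 / n) (by positivity) (by positivity) hAc hmass'
  haveI := hprob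
  refine ⟨hprob, ?_⟩
  set G := gibbs π β fun θ => ‖m θ - μh‖ ^ 2 with hG
  have hfint : Integrable (fun θ => ‖m θ - μh‖) G :=
    aux_integrable_of_bounded hnorm.aestronglyMeasurable (C := 2) fun θ => by
      rw [Real.norm_eq_abs, abs_of_nonneg (norm_nonneg _)]; exact hfb θ
  have hf2int : Integrable (fun θ => ‖m θ - μh‖ ^ 2) G :=
    aux_integrable_of_bounded hLm.aestronglyMeasurable (C := 4) fun θ => by
      rw [Real.norm_eq_abs, abs_of_nonneg (sq_nonneg _)]; exact hL4 θ
  have hj := aux_sq_jensen G _ hfint hf2int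
  have h0 : 0 ≤ ∫ θ, ‖m θ - μh‖ ∂G := integral_nonneg fun θ => norm_nonneg _
  have hIf : ∫ θ, ‖m θ - μh‖ ∂G ≤ 2 / Real.sqrt n + δ := by
    have h1 : ∫ θ, ‖m θ - μh‖ ∂G ≤ Real.sqrt ((1 / Real.sqrt n + δ) ^ 2 + 1 / n) :=
      (Real.le_sqrt h0 (by positivity)).2 (hj.trans hL)
    have h2 : Real.sqrt ((1 / Real.sqrt n + δ) ^ 2 + 1 / n)
        ≤ Real.sqrt ((1 / Real.sqrt n + δ) ^ 2) + Real.sqrt (1 / n) :=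
      aux_sqrt_add (by positivity) (by positivity)
    have h3 : Real.sqrt ((1 / Real.sqrt n + δ) ^ 2) = 1 / Real.sqrt n + δ :=
      Real.sqrt_sq (by positivity)
    have h4 : Real.sqrt (1 / n) = 1 / Real.sqrt n := by
      rw [one_div, Real.sqrt_inv, one_div]
    have h5 := h1.trans (h2.trans_eq (by rw [h3, h4]))
    have h6 : 2 / Real.sqrt (n : ℝ) = 1 / Real.sqrt (n : ℝ) + 1 / Real.sqrt (n : ℝ) := by
      ring
    linarith
  have hgint : Integrable (fun θ => ‖m θ - μ0‖) G :=
    aux_integrable_of_bounded (hmmeas.sub stronglyMeasurable_const).norm.aestronglyMeasurable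
      (C := 2) fun θ => by
        rw [Real.norm_eq_abs, abs_of_nonneg (norm_nonneg _)]
        calc ‖m θ - μ0‖ ≤ ‖m θ‖ + ‖μ0‖ := norm_sub_le _ _
          _ ≤ 2 := by linarith [hmbdd θ]
  have htri : ∀ θ, ‖m θ - μ0‖ ≤ ‖m θ - μh‖ + δ := fun θ => by
    calc ‖m θ - μ0‖ = ‖(m θ - μh) + (μh - μ0)‖ := by rw [sub_add_sub_cancel]
      _ ≤ ‖m θ - μh‖ + δ := norm_add_le _ _
  have hmono := integral_mono hgint (hfint.add (integrable_const δ)) htri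
  simp only [Pi.add_apply] at hmono
  rw [integral_add hfint (integrable_const _), integral_const, probReal_univ] at hmono
  simp only [ENNReal.toReal_one, one_smul, smul_eq_mul, one_mul] at hmono
  linarith

lemma gibbs_meas {Θ Ω H : Type*} [MeasurableSpace Θ] [MeasurableSpace Ω]
    [NormedAddCommGroup H] (π : Measure Θ) [SFinite π] (β : ℝ)
    (m : Θ → H) (hm : StronglyMeasurable m) (u : Ω → H) (hu : StronglyMeasurable u)
    (S : Set Θ) (hS : MeasurableSet S) :
    Measurable fun ω => ((gibbs π β fun θ => ‖m θ - u ω‖ ^ 2) S).toReal := by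
  set d : Ω → Θ → ℝ≥0∞ := fun ω θ => ENNReal.ofReal (Real.exp (-β * ‖m θ - u ω‖ ^ 2)) with hd
  have hdm : Measurable (Function.uncurry d) := by
    have h1 : StronglyMeasurable fun p : Ω × Θ => m p.2 - u p.1 :=
      (hm.comp_measurable measurable_snd).sub (hu.comp_measurable measurable_fst)
    have h2 : Measurable fun p : Ω × Θ => ‖m p.2 - u p.1‖ ^ 2 :=
      (h1.norm.measurable).pow_const 2
    exact ENNReal.measurable_ofReal.comp (Real.measurable_exp.comp (h2.const_mul (-β)))
  have hZ : Measurable fun ω => ∫⁻ θ, d ω θ ∂π :=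
    Measurable.lintegral_prod_right (ν := π) hdm
  have hN : Measurable fun ω => ∫⁻ θ in S, d ω θ ∂π := by
    have h3 : Measurable (Function.uncurry fun ω θ => S.indicator (d ω) θ) := by
      have h4 : (Function.uncurry fun ω θ => S.indicator (d ω) θ)
          = (Set.univ ×ˢ S).indicator (Function.uncurry d) := by
        funext p
        by_cases hp : p.2 ∈ S <;>
          simp [Function.uncurry, Set.indicator, hp, Set.mem_prod]
      rw [h4]
      exact hdm.indicator (MeasurableSet.univ.prod hS)
    have h5 := Measurable.lintegral_prod_right (ν := π) h3
    have h6 : ∀ ω, ∫⁻ θ, S.indicator (d ω) θ ∂π = ∫⁻ θ in S, d ω θ ∂π := fun ω =>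
      lintegral_indicator hS (d ω)
    simpa only [h6] using h5
  have heq : (fun ω => ((gibbs π β fun θ => ‖m θ - u ω‖ ^ 2) S).toReal)
      = fun ω => ((∫⁻ θ, d ω θ ∂π)⁻¹ * ∫⁻ θ in S, d ω θ ∂π).toReal := by
    funext ω
    rw [gibbs, Measure.smul_apply, withDensity_apply _ hS, smul_eq_mul]
  rw [heq]
  exact (hZ.inv.mul hN).ennreal_toReal

end GibbsLemmas

section Empirical

lemma aux_emp {𝕏 H Ω : Type*} [MeasurableSpace 𝕏]
    [NormedAddCommGroup H] [InnerProductSpace ℝ H] [CompleteSpace H]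
    [MeasureSpace Ω] [IsProbabilityMeasure (ℙ : Measure Ω)]
    (Φ : 𝕏 → H) (hΦmeas : StronglyMeasurable Φ) (hΦbdd : ∀ x, ‖Φ x‖ ≤ 1)
    (P0 : Measure 𝕏) [IsProbabilityMeasure P0] (μ0 : H) (hμ0 : μ0 = ∫ x, Φ x ∂P0)
    (n : ℕ) (hn : 1 ≤ n) (X : Fin n → Ω → 𝕏) (hXmeas : ∀ i, Measurable (X i))
    (hiid : iIndepFun X ℙ)
    (hlaw : ∀ i, Measure.map (X i) ℙ = P0) :
    ∫ ω, ‖(n : ℝ)⁻¹ • ∑ i, Φ (X i ω) - μ0‖ ^ 2 ∂ℙ ≤ 1 / n := by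
  have hnpos : (0 : ℝ) < n := by exact_mod_cast hn
  have hμ0n : ‖μ0‖ ≤ 1 := by rw [hμ0]; exact aux_norm_integral_le_one Φ hΦbdd P0
  set Y : Fin n → Ω → H := fun i ω => Φ (X i ω) - μ0 with hY
  have hYm : ∀ i, StronglyMeasurable (Y i) := fun i =>
    (hΦmeas.comp_measurable (hXmeas i)).sub stronglyMeasurable_const
  have hYb : ∀ i ω, ‖Y i ω‖ ≤ 2 := fun i ω => by
    calc ‖Φ (X i ω) - μ0‖ ≤ ‖Φ (X i ω)‖ + ‖μ0‖ := norm_sub_le _ _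
      _ ≤ 2 := by linarith [hΦbdd (X i ω)]
  have hΦint : Integrable Φ P0 := aux_integrable_of_bounded hΦmeas.aestronglyMeasurable hΦbdd
  have hYint : Integrable (fun x => Φ x - μ0) P0 := hΦint.sub (integrable_const _)
  have hY0 : ∫ x, (Φ x - μ0) ∂P0 = 0 := by
    rw [integral_sub hΦint (integrable_const _), integral_const, probReal_univ, ← hμ0]
    simp
  have hrw : ∀ ω, (n : ℝ)⁻¹ • ∑ i, Φ (X i ω) - μ0 = (n : ℝ)⁻¹ • ∑ i, Y i ω := by
    intro ω
    rw [hY]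
    rw [Finset.sum_sub_distrib, smul_sub, Finset.sum_const, Finset.card_univ, Fintype.card_fin,
      ← Nat.cast_smul_eq_nsmul ℝ, smul_smul, inv_mul_cancel₀ (ne_of_gt hnpos), one_smul]
  have hip : ∀ i j : Fin n, Integrable (fun ω => ⟪Y i ω, Y j ω⟫) ℙ := fun i j =>
    aux_integrable_of_bounded ((hYm i).inner (hYm j)).aestronglyMeasurable (C := 4)
      fun ω => by
        rw [Real.norm_eq_abs]
        calc |⟪Y i ω, Y j ω⟫| ≤ ‖Y i ω‖ * ‖Y j ω‖ := abs_real_inner_le_norm _ _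
          _ ≤ 4 := by nlinarith [hYb i ω, hYb j ω, norm_nonneg (Y i ω), norm_nonneg (Y j ω)]
  have hdiag : ∀ i : Fin n, ∫ ω, ⟪Y i ω, Y i ω⟫ ∂ℙ ≤ 1 := by
    intro i
    have hg : StronglyMeasurable fun x => ⟪Φ x - μ0, Φ x - μ0⟫ :=
      (hΦmeas.sub stronglyMeasurable_const).inner (hΦmeas.sub stronglyMeasurable_const)
    have h1 : ∫ ω, ⟪Y i ω, Y i ω⟫ ∂ℙ = ∫ x, ⟪Φ x - μ0, Φ x - μ0⟫ ∂P0 := by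
      rw [← hlaw i, integral_map (hXmeas i).aemeasurable hg.aestronglyMeasurable]
    rw [h1]
    have h2 : ∀ x, ⟪Φ x - μ0, Φ x - μ0⟫ = ‖Φ x‖ ^ 2 - 2 * ⟪Φ x, μ0⟫ + ‖μ0‖ ^ 2 := fun x => by
      rw [real_inner_self_eq_norm_sq, norm_sub_sq_real]
    simp_rw [h2]
    have hint1 : Integrable (fun x => ‖Φ x‖ ^ 2) P0 :=
      aux_integrable_of_bounded (hΦmeas.norm.pow 2).aestronglyMeasurable (C := 1)
        fun x => by
          rw [Real.norm_eq_abs, abs_of_nonneg (by positivity)]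
          nlinarith [hΦbdd x, norm_nonneg (Φ x)]
    have hint2 : Integrable (fun x => 2 * ⟪Φ x, μ0⟫) P0 :=
      (aux_integrable_of_bounded (hΦmeas.inner stronglyMeasurable_const).aestronglyMeasurable
        (C := 1) fun x => by
          rw [Real.norm_eq_abs]
          calc |⟪Φ x, μ0⟫| ≤ ‖Φ x‖ * ‖μ0‖ := abs_real_inner_le_norm _ _
            _ ≤ 1 := by nlinarith [hΦbdd x, norm_nonneg (Φ x), norm_nonneg μ0]).const_mul 2
    have hsub : Integrable (fun x => ‖Φ x‖ ^ 2 - 2 * ⟪Φ x, μ0⟫) P0 := hint1.sub hint2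
    rw [integral_add hsub (integrable_const _), integral_sub hint1 hint2,
      integral_const, probReal_univ]
    have h3 : ∫ x, 2 * ⟪Φ x, μ0⟫ ∂P0 = 2 * ‖μ0‖ ^ 2 := by
      rw [integral_const_mul]
      congr 1
      have : ∀ x, ⟪Φ x, μ0⟫ = ⟪μ0, Φ x⟫ := fun x => real_inner_comm _ _
      simp_rw [this]
      rw [integral_inner hΦint, ← hμ0, real_inner_self_eq_norm_sq]
    rw [h3]
    have h4 : ∫ x, ‖Φ x‖ ^ 2 ∂P0 ≤ 1 := by
      calc ∫ x, ‖Φ x‖ ^ 2 ∂P0 ≤ ∫ _, (1 : ℝ) ∂P0 := integral_mono hint1 (integrable_const _)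
            (fun x => by nlinarith [hΦbdd x, norm_nonneg (Φ x)])
        _ = 1 := by simp
    simp only [ENNReal.toReal_one, smul_eq_mul, one_mul]
    nlinarith [sq_nonneg ‖μ0‖]
  have hoff : ∀ i j : Fin n, i ≠ j → ∫ ω, ⟪Y i ω, Y j ω⟫ ∂ℙ = 0 := by
    intro i j hij
    have hmap : Measure.map (fun ω => (X i ω, X j ω)) ℙ = P0.prod P0 := by
      have h := (hiid.indepFun hij)
      rw [indepFun_iff_map_prod_eq_prod_map_map (hXmeas i).aemeasurable
        (hXmeas j).aemeasurable] at h
      rw [h, hlaw i, hlaw j]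
    have hg : StronglyMeasurable fun q : 𝕏 × 𝕏 => ⟪Φ q.1 - μ0, Φ q.2 - μ0⟫ :=
      ((hΦmeas.comp_measurable measurable_fst).sub stronglyMeasurable_const).inner
        ((hΦmeas.comp_measurable measurable_snd).sub stronglyMeasurable_const)
    have h1 : ∫ ω, ⟪Y i ω, Y j ω⟫ ∂ℙ
        = ∫ q : 𝕏 × 𝕏, ⟪Φ q.1 - μ0, Φ q.2 - μ0⟫ ∂(P0.prod P0) := by
      rw [← hmap, integral_map ((hXmeas i).prodMk (hXmeas j)).aemeasurable
        hg.aestronglyMeasurable]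
    rw [h1]
    have hgint : Integrable (fun q : 𝕏 × 𝕏 => ⟪Φ q.1 - μ0, Φ q.2 - μ0⟫) (P0.prod P0) :=
      aux_integrable_of_bounded hg.aestronglyMeasurable (C := 4) fun q => by
        rw [Real.norm_eq_abs]
        have h5 : ‖Φ q.1 - μ0‖ ≤ 2 := by
          calc ‖Φ q.1 - μ0‖ ≤ ‖Φ q.1‖ + ‖μ0‖ := norm_sub_le _ _
            _ ≤ 2 := by linarith [hΦbdd q.1]
        have h6 : ‖Φ q.2 - μ0‖ ≤ 2 := by
          calc ‖Φ q.2 - μ0‖ ≤ ‖Φ q.2‖ + ‖μ0‖ := norm_sub_le _ _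
            _ ≤ 2 := by linarith [hΦbdd q.2]
        calc |⟪Φ q.1 - μ0, Φ q.2 - μ0⟫| ≤ ‖Φ q.1 - μ0‖ * ‖Φ q.2 - μ0‖ :=
              abs_real_inner_le_norm _ _
          _ ≤ 4 := by nlinarith [norm_nonneg (Φ q.1 - μ0), norm_nonneg (Φ q.2 - μ0)]
    rw [integral_prod _ hgint]
    have h2 : ∀ x, ∫ y, ⟪Φ x - μ0, Φ y - μ0⟫ ∂P0 = 0 := fun x => by
      rw [integral_inner hYint, hY0, inner_zero_right]
    simp_rw [h2, integral_zero]
  have hexp : ∀ ω, ‖∑ i, Y i ω‖ ^ 2 = ∑ i, ∑ j, ⟪Y i ω, Y j ω⟫ := fun ω => by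
    rw [← real_inner_self_eq_norm_sq, sum_inner]
    exact Finset.sum_congr rfl fun i _ => inner_sum _ _ _
  have hSle : ∫ ω, ‖∑ i, Y i ω‖ ^ 2 ∂ℙ ≤ n := by
    simp_rw [hexp]
    rw [integral_finset_sum _ fun i _ => integrable_finset_sum _ fun j _ => hip i j]
    have h7 : ∀ i : Fin n, ∫ ω, ∑ j, ⟪Y i ω, Y j ω⟫ ∂ℙ ≤ 1 := fun i => by
      rw [integral_finset_sum _ fun j _ => hip i j]
      have h8 : ∑ j, ∫ ω, ⟪Y i ω, Y j ω⟫ ∂ℙ = ∫ ω, ⟪Y i ω, Y i ω⟫ ∂ℙ :=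
        Finset.sum_eq_single_of_mem i (Finset.mem_univ i)
          (fun j _ hji => hoff i j (Ne.symm hji))
      rw [h8]; exact hdiag i
    calc ∑ i, ∫ ω, ∑ j, ⟪Y i ω, Y j ω⟫ ∂ℙ ≤ ∑ _i : Fin n, (1 : ℝ) :=
          Finset.sum_le_sum fun i _ => h7 i
      _ = n := by simp
  have hfinal : ∀ ω, ‖(n : ℝ)⁻¹ • ∑ i, Φ (X i ω) - μ0‖ ^ 2
      = ((n : ℝ)⁻¹) ^ 2 * ‖∑ i, Y i ω‖ ^ 2 := fun ω => by
    rw [hrw ω, norm_smul, Real.norm_eq_abs, abs_of_nonneg (by positivity), mul_pow]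
  simp_rw [hfinal]
  rw [integral_const_mul]
  calc ((n : ℝ)⁻¹) ^ 2 * ∫ ω, ‖∑ i, Y i ω‖ ^ 2 ∂ℙ ≤ ((n : ℝ)⁻¹) ^ 2 * (n : ℝ) :=
        mul_le_mul_of_nonneg_left hSle (by positivity)
    _ = 1 / (n : ℝ) := by rw [pow_two]; field_simp

end Empirical

/-- Concentration of the MMD-Bayes posterior in the well-specified case
`P₀ = P_{θ*}`.  The MMD is expressed via the kernel mean embedding: `Φ` is the
feature map of a kernel bounded by 1, `m θ = μ_{P_θ}`, `μ0 = μ_{P₀} = m θ*`, and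
the empirical embedding of the i.i.d. sample `X₁,…,Xₙ ∼ P₀` is `(1/n)∑ᵢ Φ(Xᵢ)`.
Under the prior mass condition, `E[∫ D_k(P_θ,P₀) π_n^β(dθ)] ≤ 4/√n`; consequently
for any `Mₙ → ∞` the posterior mass of `{θ : D_k(P_θ,P₀) > Mₙ n^{-1/2}}` converges
to `0` in L¹ and in probability. -/
theorem stmt_11 {𝕏 H Θ Ω : Type*} [MeasurableSpace 𝕏]
    [NormedAddCommGroup H] [InnerProductSpace ℝ H] [CompleteSpace H]
    [MeasurableSpace Θ] [MeasureSpace Ω] [IsProbabilityMeasure (ℙ : Measure Ω)]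
    (Φ : 𝕏 → H) (hΦmeas : StronglyMeasurable Φ) (hΦbdd : ∀ x, ‖Φ x‖ ≤ 1)
    (P : Θ → Measure 𝕏) (hP : ∀ θ, IsProbabilityMeasure (P θ))
    (m : Θ → H) (hm : ∀ θ, m θ = ∫ x, Φ x ∂(P θ)) (hmmeas : StronglyMeasurable m)
    (P0 : Measure 𝕏) [IsProbabilityMeasure P0] (μ0 : H) (hμ0 : μ0 = ∫ x, Φ x ∂P0)
    (θs : Θ) (hwell : P0 = P θs)
    (X : ∀ n : ℕ, Fin n → Ω → 𝕏) (hXmeas : ∀ n i, Measurable (X n i))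
    (hiid : ∀ n, iIndepFun (X n) ℙ)
    (hlaw : ∀ n i, Measure.map (X n i) ℙ = P0)
    (π : Measure Θ) [IsProbabilityMeasure π] (β : ℝ) (hβ : 0 < β)
    (hmass : ∀ n : ℕ, 1 ≤ n → ENNReal.ofReal (Real.exp (-β / n))
      ≤ π {θ | ‖m θ - m θs‖ ≤ 1 / Real.sqrt n}) :
    (∀ n : ℕ, 1 ≤ n →
        (∫ ω, ∫ θ, ‖m θ - μ0‖
            ∂(gibbs π β fun θ => ‖m θ - (n : ℝ)⁻¹ • ∑ i, Φ (X n i ω)‖ ^ 2) ∂ℙ)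
          ≤ 4 / Real.sqrt n) ∧
      ∀ M : ℕ → ℝ, Tendsto M atTop atTop →
        (Tendsto (fun n : ℕ => ∫ ω,
            ((gibbs π β fun θ => ‖m θ - (n : ℝ)⁻¹ • ∑ i, Φ (X n i ω)‖ ^ 2)
              {θ | M n / Real.sqrt n < ‖m θ - μ0‖}).toReal ∂ℙ)
          atTop (nhds 0)) ∧
        ∀ ε : ℝ, 0 < ε →
          Tendsto (fun n : ℕ => (ℙ {ω : Ω |
              ε < ((gibbs π β fun θ => ‖m θ - (n : ℝ)⁻¹ • ∑ i, Φ (X n i ω)‖ ^ 2)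
                {θ | M n / Real.sqrt n < ‖m θ - μ0‖}).toReal}).toReal)
            atTop (nhds 0) := by
  -- basic facts
  have hmbdd : ∀ θ, ‖m θ‖ ≤ 1 := fun θ => by
    haveI := hP θ
    rw [hm θ]; exact aux_norm_integral_le_one Φ hΦbdd (P θ)
  have hθs : m θs = μ0 := by rw [hm θs, hμ0, hwell]
  have hμ0n : ‖μ0‖ ≤ 1 := hθs ▸ hmbdd θs
  -- the empirical embedding
  have hμhm : ∀ n : ℕ, StronglyMeasurable fun ω => (n : ℝ)⁻¹ • ∑ i, Φ (X n i ω) := by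
    intro n
    have h1 : StronglyMeasurable fun ω => ∑ i : Fin n, Φ (X n i ω) :=
      Finset.stronglyMeasurable_fun_sum _ fun i _ => hΦmeas.comp_measurable (hXmeas n i)
    exact h1.const_smul ((n : ℝ)⁻¹)
  have hδm : ∀ n : ℕ, StronglyMeasurable fun ω => ‖(n : ℝ)⁻¹ • ∑ i, Φ (X n i ω) - μ0‖ :=
    fun n => ((hμhm n).sub stronglyMeasurable_const).norm
  have hμhb : ∀ n : ℕ, 1 ≤ n → ∀ ω, ‖(n : ℝ)⁻¹ • ∑ i : Fin n, Φ (X n i ω)‖ ≤ 1 := by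
    intro n hn ω
    have hnpos : (0 : ℝ) < n := by exact_mod_cast hn
    have h1 : ‖∑ i : Fin n, Φ (X n i ω)‖ ≤ n := by
      calc ‖∑ i : Fin n, Φ (X n i ω)‖ ≤ ∑ i : Fin n, ‖Φ (X n i ω)‖ := norm_sum_le _ _
        _ ≤ ∑ _i : Fin n, (1 : ℝ) := Finset.sum_le_sum fun i _ => hΦbdd _
        _ = n := by simp
    rw [norm_smul, Real.norm_eq_abs, abs_of_nonneg (by positivity)]
    calc (n : ℝ)⁻¹ * ‖∑ i : Fin n, Φ (X n i ω)‖ ≤ (n : ℝ)⁻¹ * n :=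
          mul_le_mul_of_nonneg_left h1 (by positivity)
      _ = 1 := inv_mul_cancel₀ (ne_of_gt hnpos)
  have hδb : ∀ n : ℕ, 1 ≤ n → ∀ ω, ‖(n : ℝ)⁻¹ • ∑ i, Φ (X n i ω) - μ0‖ ≤ 2 := by
    intro n hn ω
    calc ‖(n : ℝ)⁻¹ • ∑ i, Φ (X n i ω) - μ0‖
        ≤ ‖(n : ℝ)⁻¹ • ∑ i : Fin n, Φ (X n i ω)‖ + ‖μ0‖ := norm_sub_le _ _
      _ ≤ 2 := by linarith [hμhb n hn ω]
  have hδint : ∀ n : ℕ, 1 ≤ n →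
      Integrable (fun ω => ‖(n : ℝ)⁻¹ • ∑ i, Φ (X n i ω) - μ0‖) ℙ := fun n hn =>
    aux_integrable_of_bounded (hδm n).aestronglyMeasurable (C := 2) fun ω => by
      rw [Real.norm_eq_abs, abs_of_nonneg (norm_nonneg _)]; exact hδb n hn ω
  have hEδ : ∀ n : ℕ, 1 ≤ n →
      ∫ ω, ‖(n : ℝ)⁻¹ • ∑ i, Φ (X n i ω) - μ0‖ ∂ℙ ≤ 1 / Real.sqrt n := by
    intro n hn
    have hnpos : (0 : ℝ) < n := by exact_mod_cast hn
    have hsq := aux_emp Φ hΦmeas hΦbdd P0 μ0 hμ0 n hn (X n) (hXmeas n) (hiid n) (hlaw n)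
    have hδ2int : Integrable (fun ω => ‖(n : ℝ)⁻¹ • ∑ i, Φ (X n i ω) - μ0‖ ^ 2) ℙ :=
      aux_integrable_of_bounded ((hδm n).pow 2).aestronglyMeasurable (C := 4) fun ω => by
        rw [Real.norm_eq_abs, abs_of_nonneg (sq_nonneg _)]
        nlinarith [hδb n hn ω, norm_nonneg ((n : ℝ)⁻¹ • ∑ i, Φ (X n i ω) - μ0)]
    have hj := aux_sq_jensen ℙ _ (hδint n hn) hδ2int
    have h0 : 0 ≤ ∫ ω, ‖(n : ℝ)⁻¹ • ∑ i, Φ (X n i ω) - μ0‖ ∂ℙ :=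
      integral_nonneg fun ω => norm_nonneg _
    have h1 := (Real.le_sqrt h0 (by positivity)).2 (hj.trans hsq)
    calc ∫ ω, ‖(n : ℝ)⁻¹ • ∑ i, Φ (X n i ω) - μ0‖ ∂ℙ ≤ Real.sqrt (1 / n) := h1
      _ = 1 / Real.sqrt n := by rw [one_div, Real.sqrt_inv, one_div]
  -- the pointwise key bound
  have hkey : ∀ n : ℕ, 1 ≤ n → ∀ ω : Ω,
      IsProbabilityMeasure (gibbs π β fun θ => ‖m θ - (n : ℝ)⁻¹ • ∑ i, Φ (X n i ω)‖ ^ 2) ∧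
      ∫ θ, ‖m θ - μ0‖ ∂(gibbs π β fun θ => ‖m θ - (n : ℝ)⁻¹ • ∑ i, Φ (X n i ω)‖ ^ 2)
        ≤ 2 / Real.sqrt n + 2 * ‖(n : ℝ)⁻¹ • ∑ i, Φ (X n i ω) - μ0‖ :=
    fun n hn ω => gibbs_mmd_bound π β hβ m hmmeas hmbdd μ0 θs hθs _
      (hμhb n hn ω) n hn (hmass n hn)
  have hpart1 : ∀ n : ℕ, 1 ≤ n →
      (∫ ω, ∫ θ, ‖m θ - μ0‖
          ∂(gibbs π β fun θ => ‖m θ - (n : ℝ)⁻¹ • ∑ i, Φ (X n i ω)‖ ^ 2) ∂ℙ)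
        ≤ 4 / Real.sqrt n := by
    intro n hn
    have hnpos : (0 : ℝ) < n := by exact_mod_cast hn
    have hs : 0 < Real.sqrt n := Real.sqrt_pos.2 hnpos
    have hRint : Integrable
        (fun ω => 2 / Real.sqrt n + 2 * ‖(n : ℝ)⁻¹ • ∑ i, Φ (X n i ω) - μ0‖) ℙ :=
      (integrable_const _).add ((hδint n hn).const_mul 2)
    have hmono := integral_mono_of_nonneg
      (Filter.Eventually.of_forall fun ω =>
        integral_nonneg fun θ => norm_nonneg (m θ - μ0))
      hRint (Filter.Eventually.of_forall fun ω => (hkey n hn ω).2)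
    calc (∫ ω, ∫ θ, ‖m θ - μ0‖
            ∂(gibbs π β fun θ => ‖m θ - (n : ℝ)⁻¹ • ∑ i, Φ (X n i ω)‖ ^ 2) ∂ℙ)
        ≤ ∫ ω, (2 / Real.sqrt n + 2 * ‖(n : ℝ)⁻¹ • ∑ i, Φ (X n i ω) - μ0‖) ∂ℙ := hmono
      _ = 2 / Real.sqrt n + 2 * ∫ ω, ‖(n : ℝ)⁻¹ • ∑ i, Φ (X n i ω) - μ0‖ ∂ℙ := by
          rw [integral_add (integrable_const _) ((hδint n hn).const_mul 2),
            integral_const, probReal_univ, integral_const_mul]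
          simp
      _ ≤ 2 / Real.sqrt n + 2 * (1 / Real.sqrt n) := by
          have := hEδ n hn
          linarith
      _ = 4 / Real.sqrt n := by ring
  refine ⟨hpart1, fun M hM => ?_⟩
  -- Part 2
  have hSmeas : ∀ n : ℕ, MeasurableSet {θ | M n / Real.sqrt n < ‖m θ - μ0‖} := fun n =>
    measurableSet_lt measurable_const (hmmeas.sub stronglyMeasurable_const).norm.measurable
  set F : ℕ → ℝ := fun n => ∫ ω,
    ((gibbs π β fun θ => ‖m θ - (n : ℝ)⁻¹ • ∑ i, Φ (X n i ω)‖ ^ 2)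
      {θ | M n / Real.sqrt n < ‖m θ - μ0‖}).toReal ∂ℙ with hF
  have hF0 : ∀ n, 0 ≤ F n := fun n => integral_nonneg fun ω => ENNReal.toReal_nonneg
  have hptw : ∀ n : ℕ, 1 ≤ n → 1 ≤ M n → ∀ ω : Ω,
      ((gibbs π β fun θ => ‖m θ - (n : ℝ)⁻¹ • ∑ i, Φ (X n i ω)‖ ^ 2)
          {θ | M n / Real.sqrt n < ‖m θ - μ0‖}).toReal
        ≤ (Real.sqrt n / M n) *
          (2 / Real.sqrt n + 2 * ‖(n : ℝ)⁻¹ • ∑ i, Φ (X n i ω) - μ0‖) := by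
    intro n hn hMn ω
    have hnpos : (0 : ℝ) < n := by exact_mod_cast hn
    have hs : 0 < Real.sqrt n := Real.sqrt_pos.2 hnpos
    have hMpos : 0 < M n := lt_of_lt_of_le one_pos hMn
    set G := gibbs π β fun θ => ‖m θ - (n : ℝ)⁻¹ • ∑ i, Φ (X n i ω)‖ ^ 2 with hG
    haveI : IsProbabilityMeasure G := (hkey n hn ω).1
    have ha : 0 < M n / Real.sqrt n := by positivity
    have hfint : Integrable (fun θ => ‖m θ - μ0‖) G :=
      aux_integrable_of_bounded
        (hmmeas.sub stronglyMeasurable_const).norm.aestronglyMeasurable (C := 2) fun θ => by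
          rw [Real.norm_eq_abs, abs_of_nonneg (norm_nonneg _)]
          calc ‖m θ - μ0‖ ≤ ‖m θ‖ + ‖μ0‖ := norm_sub_le _ _
            _ ≤ 2 := by linarith [hmbdd θ]
    have hmar := mul_meas_ge_le_integral_of_nonneg
      (Filter.Eventually.of_forall fun θ => norm_nonneg (m θ - μ0)) hfint (M n / Real.sqrt n)
    have hsub : G {θ | M n / Real.sqrt n < ‖m θ - μ0‖}
        ≤ G {θ | M n / Real.sqrt n ≤ ‖m θ - μ0‖} :=
      measure_mono (Set.setOf_subset_setOf.2 fun θ hθ => le_of_lt hθ)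
    have h2 : (G {θ | M n / Real.sqrt n < ‖m θ - μ0‖}).toReal
        ≤ (G {θ | M n / Real.sqrt n ≤ ‖m θ - μ0‖}).toReal :=
      ENNReal.toReal_mono (measure_ne_top _ _) hsub
    have h3 : (M n / Real.sqrt n) * (G {θ | M n / Real.sqrt n < ‖m θ - μ0‖}).toReal
        ≤ 2 / Real.sqrt n + 2 * ‖(n : ℝ)⁻¹ • ∑ i, Φ (X n i ω) - μ0‖ := by
      calc (M n / Real.sqrt n) * (G {θ | M n / Real.sqrt n < ‖m θ - μ0‖}).toReal
          ≤ (M n / Real.sqrt n) * (G {θ | M n / Real.sqrt n ≤ ‖m θ - μ0‖}).toReal :=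
            mul_le_mul_of_nonneg_left h2 ha.le
        _ ≤ ∫ θ, ‖m θ - μ0‖ ∂G := hmar
        _ ≤ 2 / Real.sqrt n + 2 * ‖(n : ℝ)⁻¹ • ∑ i, Φ (X n i ω) - μ0‖ := (hkey n hn ω).2
    have h4 : (G {θ | M n / Real.sqrt n < ‖m θ - μ0‖}).toReal
        ≤ (2 / Real.sqrt n + 2 * ‖(n : ℝ)⁻¹ • ∑ i, Φ (X n i ω) - μ0‖) / (M n / Real.sqrt n) :=
      (le_div_iff₀ ha).2 (by linarith [h3])
    calc (G {θ | M n / Real.sqrt n < ‖m θ - μ0‖}).toReal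
        ≤ (2 / Real.sqrt n + 2 * ‖(n : ℝ)⁻¹ • ∑ i, Φ (X n i ω) - μ0‖) / (M n / Real.sqrt n) :=
          h4
      _ = (Real.sqrt n / M n) *
          (2 / Real.sqrt n + 2 * ‖(n : ℝ)⁻¹ • ∑ i, Φ (X n i ω) - μ0‖) := by
          rw [div_div_eq_mul_div, div_mul_eq_mul_div, mul_comm]
  have hFub : ∀ᶠ n in atTop, F n ≤ 4 / M n := by
    filter_upwards [hM.eventually_ge_atTop 1, eventually_ge_atTop 1] with n hMn hn
    have hnpos : (0 : ℝ) < n := by exact_mod_cast hn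
    have hs : 0 < Real.sqrt n := Real.sqrt_pos.2 hnpos
    have hMpos : 0 < M n := lt_of_lt_of_le one_pos hMn
    have hRint : Integrable (fun ω => (Real.sqrt n / M n) *
        (2 / Real.sqrt n + 2 * ‖(n : ℝ)⁻¹ • ∑ i, Φ (X n i ω) - μ0‖)) ℙ :=
      ((integrable_const _).add ((hδint n hn).const_mul 2)).const_mul _
    have hmono := integral_mono_of_nonneg
      (Filter.Eventually.of_forall fun ω => ENNReal.toReal_nonneg) hRint
      (Filter.Eventually.of_forall (hptw n hn hMn))
    calc F n ≤ ∫ ω, (Real.sqrt n / M n) *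
          (2 / Real.sqrt n + 2 * ‖(n : ℝ)⁻¹ • ∑ i, Φ (X n i ω) - μ0‖) ∂ℙ := hmono
      _ = (Real.sqrt n / M n) *
          (2 / Real.sqrt n + 2 * ∫ ω, ‖(n : ℝ)⁻¹ • ∑ i, Φ (X n i ω) - μ0‖ ∂ℙ) := by
          rw [integral_const_mul, integral_add (integrable_const _) ((hδint n hn).const_mul 2),
            integral_const, probReal_univ, integral_const_mul]
          simp
      _ ≤ (Real.sqrt n / M n) * (4 / Real.sqrt n) := by
          refine mul_le_mul_of_nonneg_left ?_ (by positivity)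
          have := hEδ n hn
          have h9 : 2 / Real.sqrt (n : ℝ) + 2 * (1 / Real.sqrt (n : ℝ))
              = 4 / Real.sqrt (n : ℝ) := by ring
          linarith
      _ = 4 / M n := by
          field_simp
  have hFtend : Tendsto F atTop (nhds 0) :=
    squeeze_zero' (Filter.Eventually.of_forall hF0) hFub
      (Filter.Tendsto.div_atTop tendsto_const_nhds hM)
  refine ⟨hFtend, fun ε hε => ?_⟩
  -- in probability
  have hhm : ∀ n : ℕ, Measurable fun ω =>
      ((gibbs π β fun θ => ‖m θ - (n : ℝ)⁻¹ • ∑ i, Φ (X n i ω)‖ ^ 2)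
        {θ | M n / Real.sqrt n < ‖m θ - μ0‖}).toReal := fun n =>
    gibbs_meas π β m hmmeas _ (hμhm n) _ (hSmeas n)
  have hub2 : ∀ᶠ n : ℕ in atTop, (ℙ {ω : Ω |
      ε < ((gibbs π β fun θ => ‖m θ - (n : ℝ)⁻¹ • ∑ i, Φ (X n i ω)‖ ^ 2)
        {θ | M n / Real.sqrt n < ‖m θ - μ0‖}).toReal}).toReal ≤ F n / ε := by
    filter_upwards [eventually_ge_atTop 1] with n hn
    set h : Ω → ℝ := fun ω =>
      ((gibbs π β fun θ => ‖m θ - (n : ℝ)⁻¹ • ∑ i, Φ (X n i ω)‖ ^ 2)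
        {θ | M n / Real.sqrt n < ‖m θ - μ0‖}).toReal with hh
    have hint : Integrable h ℙ :=
      aux_integrable_of_bounded (hhm n).aestronglyMeasurable (C := 1) fun ω => by
        rw [Real.norm_eq_abs, abs_of_nonneg ENNReal.toReal_nonneg]
        haveI := (hkey n hn ω).1
        have := ENNReal.toReal_mono ENNReal.one_ne_top (prob_le_one (μ := gibbs π β
          fun θ => ‖m θ - (n : ℝ)⁻¹ • ∑ i, Φ (X n i ω)‖ ^ 2)
          (s := {θ | M n / Real.sqrt n < ‖m θ - μ0‖}))
        simpa using this
    have hmar := mul_meas_ge_le_integral_of_nonneg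
      (Filter.Eventually.of_forall fun ω => ENNReal.toReal_nonneg) hint ε
    have hsub : ℙ {ω : Ω | ε < h ω} ≤ ℙ {ω : Ω | ε ≤ h ω} :=
      measure_mono (Set.setOf_subset_setOf.2 fun ω hω => le_of_lt hω)
    have h2 : (ℙ {ω : Ω | ε < h ω}).toReal ≤ (ℙ {ω : Ω | ε ≤ h ω}).toReal :=
      ENNReal.toReal_mono (measure_ne_top _ _) hsub
    have h3 : ε * (ℙ {ω : Ω | ε < h ω}).toReal ≤ F n := by
      calc ε * (ℙ {ω : Ω | ε < h ω}).toReal ≤ ε * (ℙ {ω : Ω | ε ≤ h ω}).toReal :=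
            mul_le_mul_of_nonneg_left h2 hε.le
        _ ≤ ∫ ω, h ω ∂ℙ := hmar
        _ = F n := rfl
    exact (le_div_iff₀ hε).2 (by linarith [h3])
  have htend2 : Tendsto (fun n => F n / ε) atTop (nhds 0) := by
    have := hFtend.div_const ε
    simpa using this
  refine squeeze_zero' (Filter.Eventually.of_forall fun n => ENNReal.toReal_nonneg) hub2 htend2
end

section
/- Let π̃_n^β be the variational approximation of the MMD-Bayes posterior over a family ℱ. Suppose there exists ρₙ ∈ ℱ with ∫ D_k²(P_θ,P_{θ*}) ρₙ(dθ) ≤ 1/n and KL(ρₙ‖π) ≤ β/n, where θ* = argmin_θ D_k(P_θ,P₀). Then E[∫ D_k²(P_θ,P₀) π̃_n^β(dθ)] ≤ 8·inf_{θ∈Θ} D_k²(P_θ,P₀) + 16/n. -/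
open MeasureTheory ProbabilityTheory

open ENNReal Finset

lemma sq_norm_tri {H : Type*} [NormedAddCommGroup H] (a b c : H) :
    ‖a - c‖ ^ 2 ≤ 2 * ‖a - b‖ ^ 2 + 2 * ‖b - c‖ ^ 2 := by
  have h : ‖a - c‖ ≤ ‖a - b‖ + ‖b - c‖ := norm_sub_le_norm_sub_add_norm_sub a b c
  nlinarith [norm_nonneg (a - c), norm_nonneg (a - b), norm_nonneg (b - c),
    sq_nonneg (‖a - b‖ - ‖b - c‖)]

lemma kl_nonneg' {Θ : Type*} [MeasurableSpace Θ] (ρ π : Measure Θ)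
    [IsProbabilityMeasure ρ] [IsProbabilityMeasure π] (hac : ρ ≪ π)
    (hint : Integrable (fun θ => Real.log ((ρ.rnDeriv π θ).toReal)) ρ) :
    0 ≤ ∫ θ, Real.log ((ρ.rnDeriv π θ).toReal) ∂ρ := by
  set g : Θ → ℝ := fun θ => (ρ.rnDeriv π θ).toReal with hg
  have hgm : Measurable g := (Measure.measurable_rnDeriv ρ π).ennreal_toReal
  have hpos : ∀ᵐ θ ∂ρ, 0 < ρ.rnDeriv π θ := Measure.rnDeriv_pos hac
  have hfin : ∀ᵐ θ ∂ρ, ρ.rnDeriv π θ < ⊤ := hac.ae_le (Measure.rnDeriv_lt_top ρ π)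
  have hgpos : ∀ᵐ θ ∂ρ, 0 < g θ := by
    filter_upwards [hpos, hfin] with θ h1 h2
    exact ENNReal.toReal_pos h1.ne' h2.ne
  have hlin : ∫⁻ θ, ENNReal.ofReal ((g θ)⁻¹) ∂ρ ≤ 1 := by
    rw [← MeasureTheory.lintegral_rnDeriv_mul hac
      (by fun_prop : AEMeasurable (fun θ => ENNReal.ofReal ((g θ)⁻¹)) π)]
    calc ∫⁻ θ, ρ.rnDeriv π θ * ENNReal.ofReal ((g θ)⁻¹) ∂π
        ≤ ∫⁻ _, 1 ∂π := by
          refine lintegral_mono_ae ?_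
          filter_upwards [Measure.rnDeriv_lt_top ρ π] with θ hθ
          rcases eq_or_ne (ρ.rnDeriv π θ) 0 with h0 | h0
          · simp [g, h0]
          · have htr : 0 < g θ := ENNReal.toReal_pos h0 hθ.ne
            rw [hg]
            simp only
            rw [ENNReal.ofReal_inv_of_pos htr, ENNReal.ofReal_toReal hθ.ne,
              ENNReal.mul_inv_cancel h0 hθ.ne]
      _ = 1 := by simp
  have hinv_int : Integrable (fun θ => (g θ)⁻¹) ρ := by
    refine ⟨hgm.inv.aestronglyMeasurable, ?_⟩
    rw [hasFiniteIntegral_iff_norm]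
    calc ∫⁻ θ, ENNReal.ofReal ‖(g θ)⁻¹‖ ∂ρ = ∫⁻ θ, ENNReal.ofReal ((g θ)⁻¹) ∂ρ := by
          refine lintegral_congr fun θ => ?_
          rw [Real.norm_eq_abs, abs_of_nonneg (inv_nonneg.2 ENNReal.toReal_nonneg)]
      _ ≤ 1 := hlin
      _ < ⊤ := by norm_num
  have hinv_le : ∫ θ, (g θ)⁻¹ ∂ρ ≤ 1 := by
    rw [integral_eq_lintegral_of_nonneg_ae
      (Filter.Eventually.of_forall fun θ => inv_nonneg.2 ENNReal.toReal_nonneg)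
      hgm.inv.aestronglyMeasurable]
    have := ENNReal.toReal_mono (by norm_num) hlin
    simpa using this
  have hle : ∀ᵐ θ ∂ρ, 1 - (g θ)⁻¹ ≤ Real.log (g θ) := by
    filter_upwards [hgpos] with θ hθ
    have h1 := Real.log_le_sub_one_of_pos (inv_pos.2 hθ)
    rw [Real.log_inv] at h1
    linarith
  have hmono := integral_mono_ae (((integrable_const (1:ℝ)).sub hinv_int).congr
    (Filter.Eventually.of_forall fun θ => rfl)) hint hle
  simp only [Pi.sub_apply] at hmono
  rw [integral_sub (integrable_const 1) hinv_int] at hmono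
  simp only [integral_const, measure_univ, probReal_univ, ENNReal.toReal_one, smul_eq_mul, one_mul] at hmono
  linarith

lemma klDiv'_gibbs {Θ : Type*} [MeasurableSpace Θ] (π : Measure Θ)
    [IsProbabilityMeasure π] {β C : ℝ} (hβ : 0 < β) {L : Θ → ℝ} (hLm : Measurable L)
    (hL0 : ∀ θ, 0 ≤ L θ) (hLC : ∀ θ, L θ ≤ C) (ρ : Measure Θ) [IsProbabilityMeasure ρ]
    (hac : ρ ≪ π) (hLint : Integrable L ρ)
    (hllr : Integrable (fun θ => Real.log ((ρ.rnDeriv π θ).toReal)) ρ) :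
    klDiv' ρ (gibbs π β L) = klDiv' ρ π + β * ∫ θ, L θ ∂ρ +
      Real.log (∫⁻ θ, ENNReal.ofReal (Real.exp (-β * L θ)) ∂π).toReal := by
  set f : Θ → ℝ≥0∞ := fun θ => ENNReal.ofReal (Real.exp (-β * L θ)) with hf
  set Z : ℝ≥0∞ := ∫⁻ θ, f θ ∂π with hZ
  have hfm : Measurable f := ((hLm.const_mul (-β)).exp).ennreal_ofReal
  have hfne0 : ∀ θ, f θ ≠ 0 := fun θ => (ENNReal.ofReal_pos.2 (Real.exp_pos _)).ne'
  have hfneT : ∀ θ, f θ ≠ ⊤ := fun θ => ENNReal.ofReal_ne_top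
  have hfle1 : ∀ θ, f θ ≤ 1 := fun θ => by
    have h1 : -β * L θ ≤ 0 := by nlinarith [hL0 θ]
    rw [hf]
    exact ENNReal.ofReal_le_one.2 (Real.exp_le_one_iff.2 h1)
  have hZle1 : Z ≤ 1 := by
    calc Z ≤ ∫⁻ _, 1 ∂π := lintegral_mono hfle1
      _ = 1 := by simp
  have hZne0 : Z ≠ 0 := by
    have : ENNReal.ofReal (Real.exp (-β * C)) ≤ Z := by
      rw [hZ]
      calc ENNReal.ofReal (Real.exp (-β * C)) = ∫⁻ _, ENNReal.ofReal (Real.exp (-β * C)) ∂π := by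
            simp
        _ ≤ ∫⁻ θ, f θ ∂π := lintegral_mono fun θ => ENNReal.ofReal_le_ofReal
            (Real.exp_le_exp.2 (by nlinarith [hLC θ]))
    intro h0
    rw [h0, nonpos_iff_eq_zero, ENNReal.ofReal_eq_zero] at this
    exact (Real.exp_pos _).not_ge this
  have hZneT : Z ≠ ⊤ := (lt_of_le_of_lt hZle1 (by norm_num)).ne
  have hZtR : 0 < Z.toReal := ENNReal.toReal_pos hZne0 hZneT
  haveI : IsFiniteMeasure (π.withDensity f) :=
    isFiniteMeasure_withDensity (lt_of_le_of_lt hZle1 (by norm_num)).ne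
  have hπac : π ≪ π.withDensity f :=
    withDensity_absolutelyContinuous' hfm.aemeasurable (ae_of_all _ hfne0)
  have step1 : ρ.rnDeriv (gibbs π β L) =ᵐ[π] (Z⁻¹)⁻¹ • ρ.rnDeriv (π.withDensity f) := by
    have := Measure.rnDeriv_smul_right_of_ne_top ρ (π.withDensity f)
      (r := Z⁻¹) (ENNReal.inv_ne_zero.2 hZneT) (ENNReal.inv_ne_top.2 hZne0)
    exact hπac.ae_le this
  have step2 : ρ.rnDeriv (π.withDensity f) =ᵐ[π] fun θ => (f θ)⁻¹ * ρ.rnDeriv π θ :=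
    Measure.rnDeriv_withDensity_right ρ π hfm.aemeasurable (ae_of_all _ hfne0)
      (ae_of_all _ hfneT)
  have hpos : ∀ᵐ θ ∂ρ, 0 < ρ.rnDeriv π θ := Measure.rnDeriv_pos hac
  have hfin : ∀ᵐ θ ∂ρ, ρ.rnDeriv π θ < ⊤ := hac.ae_le (Measure.rnDeriv_lt_top ρ π)
  have key : ∀ᵐ θ ∂ρ, Real.log ((ρ.rnDeriv (gibbs π β L) θ).toReal)
      = Real.log ((ρ.rnDeriv π θ).toReal) + β * L θ + Real.log Z.toReal := by
    filter_upwards [hac.ae_le step1, hac.ae_le step2, hpos, hfin] with θ h1 h2 h3 h4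
    rw [h1]
    simp only [Pi.smul_apply, smul_eq_mul, inv_inv]
    rw [h2, ← mul_assoc, ENNReal.toReal_mul, ENNReal.toReal_mul, ENNReal.toReal_inv]
    have hfθ : (f θ).toReal = Real.exp (-β * L θ) := by
      rw [hf]; exact ENNReal.toReal_ofReal (Real.exp_pos _).le
    have hrt : 0 < (ρ.rnDeriv π θ).toReal := ENNReal.toReal_pos h3.ne' h4.ne
    rw [hfθ, Real.log_mul (by positivity) hrt.ne', Real.log_mul hZtR.ne'
      (by positivity), Real.log_inv, Real.log_exp]
    ring
  rw [klDiv', integral_congr_ae key, integral_add (by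
      exact (hllr.add (hLint.const_mul β))) (integrable_const _),
    integral_add hllr (hLint.const_mul β), integral_const_mul, integral_const]
  simp [klDiv', measure_univ]

lemma emp_conc {𝕏 H Ω : Type*} [MeasurableSpace 𝕏]
    [NormedAddCommGroup H] [InnerProductSpace ℝ H] [CompleteSpace H]
    [MeasureSpace Ω] [IsProbabilityMeasure (ℙ : Measure Ω)]
    (Φ : 𝕏 → H) (hΦmeas : StronglyMeasurable Φ) (hΦbdd : ∀ x, ‖Φ x‖ ≤ 1)
    (P0 : Measure 𝕏) [IsProbabilityMeasure P0] (μ0 : H) (hμ0 : μ0 = ∫ x, Φ x ∂P0)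
    {n : ℕ} (hn : 0 < n) (X : Fin n → Ω → 𝕏) (hXmeas : ∀ i, Measurable (X i))
    (hiid : iIndepFun X ℙ)
    (hlaw : ∀ i, Measure.map (X i) ℙ = P0) :
    ∫ ω, ‖(n : ℝ)⁻¹ • ∑ i, Φ (X i ω) - μ0‖ ^ 2 ∂ℙ ≤ 1 / n := by
  have hμ0n : ‖μ0‖ ≤ 1 := by
    rw [hμ0]
    calc ‖∫ x, Φ x ∂P0‖ ≤ ∫ x, (1:ℝ) ∂P0 :=
      norm_integral_le_of_norm_le (integrable_const 1) (ae_of_all _ hΦbdd)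
    _ = 1 := by simp
  set Y : Fin n → Ω → H := fun i ω => Φ (X i ω) - μ0 with hY
  have hYsm : ∀ i, StronglyMeasurable (Y i) := fun i =>
    (hΦmeas.comp_measurable (hXmeas i)).sub stronglyMeasurable_const
  have hYbdd : ∀ i ω, ‖Y i ω‖ ≤ 2 := fun i ω => by
    calc ‖Y i ω‖ ≤ ‖Φ (X i ω)‖ + ‖μ0‖ := norm_sub_le _ _
    _ ≤ 2 := by linarith [hΦbdd (X i ω)]
  have hΦint : Integrable Φ P0 :=
    ⟨hΦmeas.aestronglyMeasurable, HasFiniteIntegral.of_bounded (C := 1) (ae_of_all _ hΦbdd)⟩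
  have hYint0 : Integrable (fun x => Φ x - μ0) P0 := hΦint.sub (integrable_const _)
  have hYmean : ∫ x, (Φ x - μ0) ∂P0 = 0 := by
    rw [integral_sub hΦint (integrable_const _), integral_const]
    simp [hμ0]
  -- pointwise rewrite
  have hpt : ∀ ω, ‖(n : ℝ)⁻¹ • ∑ i, Φ (X i ω) - μ0‖ ^ 2
      = ((n:ℝ)⁻¹)^2 * ∑ i, ∑ j, (inner ℝ (Y i ω) (Y j ω) : ℝ) := by
    intro ω
    have h1 : (n : ℝ)⁻¹ • ∑ i, Φ (X i ω) - μ0 = (n : ℝ)⁻¹ • ∑ i, Y i ω := by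
      rw [hY]
      simp only
      rw [Finset.sum_sub_distrib, smul_sub, Finset.sum_const, card_univ, Fintype.card_fin,
        (Nat.cast_smul_eq_nsmul ℝ _ _).symm, smul_smul, inv_mul_cancel₀ (by positivity : (n:ℝ) ≠ 0), one_smul]
    rw [h1, norm_smul, mul_pow,
      show ‖∑ i, Y i ω‖ ^ 2 = ∑ i, ∑ j, (inner ℝ (Y i ω) (Y j ω) : ℝ) from by
        rw [← real_inner_self_eq_norm_sq, sum_inner]; simp only [inner_sum]]
    rw [Real.norm_eq_abs, abs_of_nonneg (inv_nonneg.2 (Nat.cast_nonneg n) : (0:ℝ) ≤ ((n:ℝ))⁻¹)]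
  -- integrability of each inner product
  have hinner_sm : ∀ i j, StronglyMeasurable (fun ω => (inner ℝ (Y i ω) (Y j ω) : ℝ)) :=
    fun i j => continuous_inner.comp_stronglyMeasurable ((hYsm i).prodMk (hYsm j))
  have hinner_int : ∀ i j, Integrable (fun ω => (inner ℝ (Y i ω) (Y j ω) : ℝ)) ℙ := fun i j =>
    ⟨(hinner_sm i j).aestronglyMeasurable, HasFiniteIntegral.of_bounded (C := 4)
      (ae_of_all _ fun ω => by
        rw [Real.norm_eq_abs]
        calc |(inner ℝ (Y i ω) (Y j ω) : ℝ)| ≤ ‖Y i ω‖ * ‖Y j ω‖ := abs_real_inner_le_norm _ _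
        _ ≤ 2 * 2 := mul_le_mul (hYbdd i ω) (hYbdd j ω) (norm_nonneg _) (by norm_num)
        _ = 4 := by norm_num)⟩
  -- off-diagonal terms vanish
  have hoff : ∀ i j, i ≠ j → ∫ ω, (inner ℝ (Y i ω) (Y j ω) : ℝ) ∂ℙ = 0 := by
    intro i j hij
    have hind : IndepFun (X i) (X j) ℙ := hiid.indepFun hij
    have hmap : Measure.map (fun ω => (X i ω, X j ω)) ℙ = P0.prod P0 := by
      have h := (indepFun_iff_map_prod_eq_prod_map_map (hXmeas i).aemeasurable
        (hXmeas j).aemeasurable).mp hind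
      rw [h, hlaw i, hlaw j]
    have hgsm : StronglyMeasurable (fun p : 𝕏 × 𝕏 => (inner ℝ (Φ p.1 - μ0) (Φ p.2 - μ0) : ℝ)) :=
      continuous_inner.comp_stronglyMeasurable
        (((hΦmeas.comp_measurable measurable_fst).sub stronglyMeasurable_const).prodMk
          ((hΦmeas.comp_measurable measurable_snd).sub stronglyMeasurable_const))
    have hchg : ∫ ω, (inner ℝ (Y i ω) (Y j ω) : ℝ) ∂ℙ
        = ∫ p : 𝕏 × 𝕏, (inner ℝ (Φ p.1 - μ0) (Φ p.2 - μ0) : ℝ) ∂(P0.prod P0) := by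
      rw [← hmap, integral_map ((hXmeas i).aemeasurable.prodMk (hXmeas j).aemeasurable)
        hgsm.aestronglyMeasurable]
    rw [hchg]
    have hgint : Integrable (fun p : 𝕏 × 𝕏 => (inner ℝ (Φ p.1 - μ0) (Φ p.2 - μ0) : ℝ))
        (P0.prod P0) :=
      ⟨hgsm.aestronglyMeasurable, HasFiniteIntegral.of_bounded (C := 4)
        (ae_of_all _ fun p => by
          rw [Real.norm_eq_abs]
          calc |(inner ℝ (Φ p.1 - μ0) (Φ p.2 - μ0) : ℝ)| ≤ ‖Φ p.1 - μ0‖ * ‖Φ p.2 - μ0‖ :=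
            abs_real_inner_le_norm _ _
          _ ≤ 2 * 2 := by
            have h1 : ‖Φ p.1 - μ0‖ ≤ 2 := by
              calc ‖Φ p.1 - μ0‖ ≤ ‖Φ p.1‖ + ‖μ0‖ := norm_sub_le _ _
              _ ≤ 2 := by linarith [hΦbdd p.1]
            have h2 : ‖Φ p.2 - μ0‖ ≤ 2 := by
              calc ‖Φ p.2 - μ0‖ ≤ ‖Φ p.2‖ + ‖μ0‖ := norm_sub_le _ _
              _ ≤ 2 := by linarith [hΦbdd p.2]
            exact mul_le_mul h1 h2 (norm_nonneg _) (by norm_num)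
          _ = 4 := by norm_num)⟩
    rw [integral_prod _ hgint]
    have : ∀ x, ∫ y, (inner ℝ (Φ x - μ0) (Φ y - μ0) : ℝ) ∂P0 = 0 := fun x => by
      rw [integral_inner hYint0, hYmean, inner_zero_right]
    simp [this]
  -- diagonal terms
  have hdiag : ∀ i, ∫ ω, (inner ℝ (Y i ω) (Y i ω) : ℝ) ∂ℙ ≤ 1 := by
    intro i
    have hsm : StronglyMeasurable (fun x : 𝕏 => (inner ℝ (Φ x - μ0) (Φ x - μ0) : ℝ)) :=
      continuous_inner.comp_stronglyMeasurable
        ((hΦmeas.sub stronglyMeasurable_const).prodMk (hΦmeas.sub stronglyMeasurable_const))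
    have hchg : ∫ ω, (inner ℝ (Y i ω) (Y i ω) : ℝ) ∂ℙ
        = ∫ x, (inner ℝ (Φ x - μ0) (Φ x - μ0) : ℝ) ∂P0 := by
      rw [← hlaw i, integral_map (hXmeas i).aemeasurable hsm.aestronglyMeasurable]
    rw [hchg]
    -- expand: ⟪Φx-μ0,Φx-μ0⟫ = ‖Φx‖² - 2⟪Φx,μ0⟫ + ‖μ0‖²
    have hexp : ∀ x : 𝕏, (inner ℝ (Φ x - μ0) (Φ x - μ0) : ℝ)
        = ‖Φ x‖^2 - 2 * (inner ℝ μ0 (Φ x) : ℝ) + ‖μ0‖^2 := fun x => by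
      rw [inner_sub_sub_self]
      rw [real_inner_self_eq_norm_sq, real_inner_self_eq_norm_sq, real_inner_comm]
      ring
    rw [integral_congr_ae (ae_of_all _ hexp)]
    have hsq_int : Integrable (fun x => ‖Φ x‖^2) P0 :=
      ⟨(hΦmeas.norm.pow 2).aestronglyMeasurable, HasFiniteIntegral.of_bounded (C := 1)
        (ae_of_all _ fun x => by
          rw [Real.norm_eq_abs, abs_of_nonneg (by positivity)]
          nlinarith [hΦbdd x, norm_nonneg (Φ x)])⟩
    have hip_int : Integrable (fun x => (inner ℝ μ0 (Φ x) : ℝ)) P0 :=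
      ⟨(continuous_const.inner continuous_id').comp_stronglyMeasurable hΦmeas
        |>.aestronglyMeasurable, HasFiniteIntegral.of_bounded (C := 1)
        (ae_of_all _ fun x => by
          rw [Real.norm_eq_abs]
          calc |(inner ℝ μ0 (Φ x) : ℝ)| ≤ ‖μ0‖ * ‖Φ x‖ := abs_real_inner_le_norm _ _
          _ ≤ 1 * 1 := mul_le_mul hμ0n (hΦbdd x) (norm_nonneg _) (by norm_num)
          _ = 1 := by norm_num)⟩
    have hint1 : Integrable (fun x => ‖Φ x‖ ^ 2 - 2 * (inner ℝ μ0 (Φ x) : ℝ)) P0 :=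
      hsq_int.sub (hip_int.const_mul 2)
    rw [integral_add hint1 (integrable_const _),
      integral_sub hsq_int (hip_int.const_mul 2), integral_const_mul,
      integral_inner hΦint, ← hμ0, real_inner_self_eq_norm_sq, integral_const]
    have h1 : ∫ x, ‖Φ x‖^2 ∂P0 ≤ 1 := by
      calc ∫ x, ‖Φ x‖^2 ∂P0 ≤ ∫ _, (1:ℝ) ∂P0 := integral_mono hsq_int (integrable_const 1)
            (fun x => by nlinarith [hΦbdd x, norm_nonneg (Φ x)])
      _ = 1 := by simp
    simp only [measure_univ, probReal_univ, ENNReal.toReal_one, smul_eq_mul, one_mul]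
    nlinarith [sq_nonneg ‖μ0‖]
  -- put it together
  calc ∫ ω, ‖(n : ℝ)⁻¹ • ∑ i, Φ (X i ω) - μ0‖ ^ 2 ∂ℙ
      = ((n:ℝ)⁻¹)^2 * ∑ i, ∑ j, ∫ ω, (inner ℝ (Y i ω) (Y j ω) : ℝ) ∂ℙ := by
        rw [integral_congr_ae (ae_of_all _ hpt), integral_const_mul]
        congr 1
        rw [integral_finset_sum _ fun i _ => integrable_finset_sum _ fun j _ => hinner_int i j]
        exact Finset.sum_congr rfl fun i _ =>
          integral_finset_sum _ fun j _ => hinner_int i j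
    _ ≤ ((n:ℝ)⁻¹)^2 * n := by
        have hsum : ∑ i, ∑ j, ∫ ω, (inner ℝ (Y i ω) (Y j ω) : ℝ) ∂ℙ ≤ n := by
          calc ∑ i : Fin n, ∑ j, ∫ ω, (inner ℝ (Y i ω) (Y j ω) : ℝ) ∂ℙ
              = ∑ i : Fin n, ∫ ω, (inner ℝ (Y i ω) (Y i ω) : ℝ) ∂ℙ := by
                refine Finset.sum_congr rfl fun i _ => ?_
                rw [← Finset.sum_subset (Finset.subset_univ {i})]
                · simp
                · intro j _ hj
                  simp only [Finset.mem_singleton] at hj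
                  exact hoff i j (fun h => hj h.symm)
            _ ≤ ∑ _i : Fin n, (1:ℝ) := Finset.sum_le_sum fun i _ => hdiag i
            _ = n := by simp
        have : (0:ℝ) ≤ ((n:ℝ)⁻¹)^2 := by positivity
        nlinarith
    _ = 1 / n := by
        field_simp

lemma int_sq {H Θ : Type*} [NormedAddCommGroup H] [MeasurableSpace Θ]
    {m : Θ → H} (hmmeas : StronglyMeasurable m) (hm1 : ∀ θ, ‖m θ‖ ≤ 1)
    (v : H) (hv : ‖v‖ ≤ 1) (μ : Measure Θ) [IsFiniteMeasure μ] :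
    Integrable (fun θ => ‖m θ - v‖ ^ 2) μ := by
  refine ⟨((hmmeas.sub stronglyMeasurable_const).norm.pow 2).aestronglyMeasurable,
    HasFiniteIntegral.of_bounded (C := 4) (ae_of_all _ fun θ => ?_)⟩
  rw [Real.norm_eq_abs, abs_of_nonneg (by positivity)]
  have h : ‖m θ - v‖ ≤ 2 := by
    calc ‖m θ - v‖ ≤ ‖m θ‖ + ‖v‖ := norm_sub_le _ _
    _ ≤ 2 := by linarith [hm1 θ]
  nlinarith [norm_nonneg (m θ - v)]

lemma per_omega {H Θ : Type*} [NormedAddCommGroup H] [InnerProductSpace ℝ H]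
    [MeasurableSpace Θ]
    {m : Θ → H} (hmmeas : StronglyMeasurable m) (hm1 : ∀ θ, ‖m θ‖ ≤ 1)
    (μ0 μhat : H) (hμ0n : ‖μ0‖ ≤ 1) (hμhn : ‖μhat‖ ≤ 1)
    (π : Measure Θ) [IsProbabilityMeasure π] {β : ℝ} (hβ : 0 < β)
    (θs : Θ) {c : ℝ} (hc : 0 ≤ c)
    (ρt ρn : Measure Θ) [IsProbabilityMeasure ρt] [IsProbabilityMeasure ρn]
    (hact : ρt ≪ π)
    (hllrt : Integrable (fun θ => Real.log ((ρt.rnDeriv π θ).toReal)) ρt)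
    (hacn : ρn ≪ π)
    (hllrn : Integrable (fun θ => Real.log ((ρn.rnDeriv π θ).toReal)) ρn)
    (hmin : klDiv' ρt (gibbs π β fun θ => ‖m θ - μhat‖ ^ 2)
      ≤ klDiv' ρn (gibbs π β fun θ => ‖m θ - μhat‖ ^ 2))
    (hρn1 : ∫ θ, ‖m θ - m θs‖ ^ 2 ∂ρn ≤ c) (hρn2 : klDiv' ρn π ≤ β * c) :
    ∫ θ, ‖m θ - μ0‖ ^ 2 ∂ρt ≤ 6 * c + 8 * ‖m θs - μ0‖ ^ 2 + 10 * ‖μhat - μ0‖ ^ 2 := by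
  set L : Θ → ℝ := fun θ => ‖m θ - μhat‖ ^ 2 with hL
  have hLm : Measurable L := ((hmmeas.sub stronglyMeasurable_const).norm.pow 2).measurable
  have hL0 : ∀ θ, 0 ≤ L θ := fun θ => by positivity
  have hL4 : ∀ θ, L θ ≤ 4 := fun θ => by
    have h : ‖m θ - μhat‖ ≤ 2 := by
      calc ‖m θ - μhat‖ ≤ ‖m θ‖ + ‖μhat‖ := norm_sub_le _ _
      _ ≤ 2 := by linarith [hm1 θ]
    have := norm_nonneg (m θ - μhat)
    show ‖m θ - μhat‖ ^ 2 ≤ 4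
    nlinarith
  have hLint_t : Integrable L ρt := int_sq hmmeas hm1 μhat hμhn ρt
  have hLint_n : Integrable L ρn := int_sq hmmeas hm1 μhat hμhn ρn
  have h1 := klDiv'_gibbs π (C := 4) hβ hLm hL0 hL4 ρt hact hLint_t hllrt
  have h2 := klDiv'_gibbs π (C := 4) hβ hLm hL0 hL4 ρn hacn hLint_n hllrn
  rw [h1, h2] at hmin
  have hklt : 0 ≤ klDiv' ρt π := kl_nonneg' ρt π hact hllrt
  have hstep : ∫ θ, L θ ∂ρt ≤ ∫ θ, L θ ∂ρn + c := by
    have hβL : β * ∫ θ, L θ ∂ρt ≤ β * c + β * ∫ θ, L θ ∂ρn := by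
      unfold klDiv' at hmin hklt hρn2
      linarith
    nlinarith
  -- compare ∫ L dρn with ∫ ‖m - m θs‖² and ‖m θs - μhat‖²
  have hmθs : ‖m θs - μhat‖ ≤ 2 := by
    calc ‖m θs - μhat‖ ≤ ‖m θs‖ + ‖μhat‖ := norm_sub_le _ _
    _ ≤ 2 := by linarith [hm1 θs]
  have hB : ∫ θ, L θ ∂ρn ≤ 2 * c + 2 * ‖m θs - μhat‖ ^ 2 := by
    have hrhs : Integrable (fun θ => 2 * ‖m θ - m θs‖ ^ 2 + 2 * ‖m θs - μhat‖ ^ 2) ρn := by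
      have h1 : ‖m θs‖ ≤ 1 := hm1 θs
      exact ((int_sq hmmeas hm1 (m θs) h1 ρn).const_mul 2).add (integrable_const _)
    calc ∫ θ, L θ ∂ρn ≤ ∫ θ, (2 * ‖m θ - m θs‖ ^ 2 + 2 * ‖m θs - μhat‖ ^ 2) ∂ρn :=
          integral_mono hLint_n hrhs fun θ => sq_norm_tri (m θ) (m θs) μhat
      _ = 2 * ∫ θ, ‖m θ - m θs‖ ^ 2 ∂ρn + 2 * ‖m θs - μhat‖ ^ 2 := by
          rw [integral_add ((int_sq hmmeas hm1 (m θs) (hm1 θs) ρn).const_mul 2)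
            (integrable_const _), integral_const_mul, integral_const]
          simp [measure_univ]
      _ ≤ 2 * c + 2 * ‖m θs - μhat‖ ^ 2 := by nlinarith
  have hA : ∫ θ, ‖m θ - μ0‖ ^ 2 ∂ρt ≤ 2 * ∫ θ, L θ ∂ρt + 2 * ‖μhat - μ0‖ ^ 2 := by
    have hrhs : Integrable (fun θ => 2 * L θ + 2 * ‖μhat - μ0‖ ^ 2) ρt :=
      (hLint_t.const_mul 2).add (integrable_const _)
    calc ∫ θ, ‖m θ - μ0‖ ^ 2 ∂ρt ≤ ∫ θ, (2 * L θ + 2 * ‖μhat - μ0‖ ^ 2) ∂ρt :=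
          integral_mono (int_sq hmmeas hm1 μ0 hμ0n ρt) hrhs
            fun θ => sq_norm_tri (m θ) μhat μ0
      _ = 2 * ∫ θ, L θ ∂ρt + 2 * ‖μhat - μ0‖ ^ 2 := by
          rw [integral_add (hLint_t.const_mul 2) (integrable_const _), integral_const_mul,
            integral_const]
          simp [measure_univ]
  have hC : ‖m θs - μhat‖ ^ 2 ≤ 2 * ‖m θs - μ0‖ ^ 2 + 2 * ‖μ0 - μhat‖ ^ 2 :=
    sq_norm_tri (m θs) μ0 μhat
  rw [norm_sub_rev μ0 μhat] at hC
  linarith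


/-- Robust generalization bound for the variational approximation `π̃_n^β` of the
MMD-Bayes posterior: `π̃_n^β` minimizes `ρ ↦ KL(ρ‖π_n^β)` over a variational family
`ℱ`.  The MMD is expressed via the kernel mean embedding: `Φ` is the feature map of
a kernel bounded by 1, `m θ = μ_{P_θ}`, `μ0 = μ_{P₀}`, and the empirical embedding
of the i.i.d. sample `X₁,…,Xₙ ∼ P₀` is `(1/n)∑ᵢ Φ(Xᵢ)`.  Under the extended prior
mass condition (existence of `ρₙ ∈ ℱ` with `∫ D_k²(P_θ,P_{θ*}) dρₙ ≤ 1/n` and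
`KL(ρₙ‖π) ≤ β/n`, where `θ*` minimizes `D_k(P_θ,P₀)`),
`E[∫ D_k²(P_θ,P₀) π̃_n^β(dθ)] ≤ 8 inf_θ D_k²(P_θ,P₀) + 16/n`. -/
theorem stmt_14 {𝕏 H Θ Ω : Type*} [MeasurableSpace 𝕏]
    [NormedAddCommGroup H] [InnerProductSpace ℝ H] [CompleteSpace H]
    [MeasurableSpace Θ] [MeasureSpace Ω] [IsProbabilityMeasure (ℙ : Measure Ω)]
    (Φ : 𝕏 → H) (hΦmeas : StronglyMeasurable Φ) (hΦbdd : ∀ x, ‖Φ x‖ ≤ 1)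
    (P : Θ → Measure 𝕏) (hP : ∀ θ, IsProbabilityMeasure (P θ))
    (m : Θ → H) (hm : ∀ θ, m θ = ∫ x, Φ x ∂(P θ)) (hmmeas : StronglyMeasurable m)
    (P0 : Measure 𝕏) [IsProbabilityMeasure P0] (μ0 : H) (hμ0 : μ0 = ∫ x, Φ x ∂P0)
    {n : ℕ} (hn : 0 < n) (X : Fin n → Ω → 𝕏) (hXmeas : ∀ i, Measurable (X i))
    (hiid : iIndepFun X ℙ)
    (hlaw : ∀ i, Measure.map (X i) ℙ = P0)
    (π : Measure Θ) [IsProbabilityMeasure π] (β : ℝ) (hβ : 0 < β)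
    (θs : Θ) (hθs : ∀ θ, ‖m θs - μ0‖ ≤ ‖m θ - μ0‖)
    -- the variational family and its regularity
    (F : Set (Measure Θ))
    (hF : ∀ ρ ∈ F, IsProbabilityMeasure ρ ∧ ρ ≪ π ∧
      Integrable (fun θ => Real.log ((ρ.rnDeriv π θ).toReal)) ρ)
    -- the variational approximation: for each sample, the KL-closest member of ℱ
    (ρtilde : Ω → Measure Θ) (hρtildeF : ∀ ω, ρtilde ω ∈ F)
    (hρtilde : ∀ ω, ∀ ρ ∈ F,
      klDiv' (ρtilde ω) (gibbs π β fun θ => ‖m θ - (n : ℝ)⁻¹ • ∑ i, Φ (X i ω)‖ ^ 2)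
        ≤ klDiv' ρ (gibbs π β fun θ => ‖m θ - (n : ℝ)⁻¹ • ∑ i, Φ (X i ω)‖ ^ 2))
    -- extended prior mass condition
    (ρn : Measure Θ) (hρnF : ρn ∈ F)
    (hρn1 : (∫ θ, ‖m θ - m θs‖ ^ 2 ∂ρn) ≤ 1 / n)
    (hρn2 : klDiv' ρn π ≤ β / n) :
    (∫ ω, ∫ θ, ‖m θ - μ0‖ ^ 2 ∂(ρtilde ω) ∂ℙ)
      ≤ 8 * (⨅ θ, ‖m θ - μ0‖ ^ 2) + 16 / n := by
  have hn' : (0:ℝ) < n := by exact_mod_cast hn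
  have hm1 : ∀ θ, ‖m θ‖ ≤ 1 := fun θ => by
    haveI := hP θ
    rw [hm θ]
    calc ‖∫ x, Φ x ∂(P θ)‖ ≤ ∫ x, (1:ℝ) ∂(P θ) :=
      norm_integral_le_of_norm_le (integrable_const 1) (ae_of_all _ hΦbdd)
    _ = 1 := by simp
  have hμ0n : ‖μ0‖ ≤ 1 := by
    rw [hμ0]
    calc ‖∫ x, Φ x ∂P0‖ ≤ ∫ x, (1:ℝ) ∂P0 :=
      norm_integral_le_of_norm_le (integrable_const 1) (ae_of_all _ hΦbdd)
    _ = 1 := by simp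
  have hμhn : ∀ ω, ‖(n : ℝ)⁻¹ • ∑ i, Φ (X i ω)‖ ≤ 1 := fun ω => by
    rw [norm_smul, Real.norm_eq_abs, abs_of_nonneg (inv_nonneg.2 hn'.le)]
    have h : ‖∑ i, Φ (X i ω)‖ ≤ n := by
      calc ‖∑ i, Φ (X i ω)‖ ≤ ∑ i : Fin n, ‖Φ (X i ω)‖ := norm_sum_le _ _
      _ ≤ ∑ _i : Fin n, (1:ℝ) := Finset.sum_le_sum fun i _ => hΦbdd _
      _ = n := by simp
    calc (n:ℝ)⁻¹ * ‖∑ i, Φ (X i ω)‖ ≤ (n:ℝ)⁻¹ * n :=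
      mul_le_mul_of_nonneg_left h (inv_nonneg.2 hn'.le)
    _ = 1 := inv_mul_cancel₀ hn'.ne'
  -- the infimum is attained at θs
  haveI : Nonempty Θ := ⟨θs⟩
  have hinf : (⨅ θ, ‖m θ - μ0‖ ^ 2) = ‖m θs - μ0‖ ^ 2 := by
    refine le_antisymm (ciInf_le ⟨0, ?_⟩ θs) (le_ciInf fun θ => ?_)
    · rintro x ⟨θ, rfl⟩
      positivity
    · have h := hθs θ
      nlinarith [norm_nonneg (m θs - μ0), norm_nonneg (m θ - μ0)]
  obtain ⟨hpn, hacn, hllrn⟩ := hF ρn hρnF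
  haveI : IsProbabilityMeasure ρn := hpn
  -- per-ω bound
  have key : ∀ ω, ∫ θ, ‖m θ - μ0‖ ^ 2 ∂(ρtilde ω)
      ≤ 6 * (1/n) + 8 * ‖m θs - μ0‖ ^ 2 + 10 * ‖(n : ℝ)⁻¹ • ∑ i, Φ (X i ω) - μ0‖ ^ 2 := by
    intro ω
    obtain ⟨hpt, hact, hllrt⟩ := hF (ρtilde ω) (hρtildeF ω)
    haveI : IsProbabilityMeasure (ρtilde ω) := hpt
    exact per_omega hmmeas hm1 μ0 ((n : ℝ)⁻¹ • ∑ i, Φ (X i ω)) hμ0n (hμhn ω) π hβ θs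
      (c := 1/n) (by positivity) (ρtilde ω) ρn hact hllrt hacn hllrn
      (hρtilde ω ρn hρnF) hρn1 (by rw [mul_one_div]; exact hρn2)
  -- measurability & integrability of the dominating function
  have hhsm : StronglyMeasurable (fun ω => ‖(n : ℝ)⁻¹ • ∑ i, Φ (X i ω) - μ0‖ ^ 2) := by
    have hsum : StronglyMeasurable (fun ω => ∑ i, Φ (X i ω)) :=
      Finset.stronglyMeasurable_fun_sum _ fun i _ => hΦmeas.comp_measurable (hXmeas i)
    exact (((hsum.const_smul ((n:ℝ)⁻¹)).sub stronglyMeasurable_const).norm.pow 2)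
  have hhint : Integrable (fun ω => ‖(n : ℝ)⁻¹ • ∑ i, Φ (X i ω) - μ0‖ ^ 2) ℙ := by
    refine ⟨hhsm.aestronglyMeasurable, HasFiniteIntegral.of_bounded (C := 4)
      (ae_of_all _ fun ω => ?_)⟩
    rw [Real.norm_eq_abs, abs_of_nonneg (by positivity)]
    have h : ‖(n : ℝ)⁻¹ • ∑ i, Φ (X i ω) - μ0‖ ≤ 2 := by
      calc ‖(n : ℝ)⁻¹ • ∑ i, Φ (X i ω) - μ0‖
          ≤ ‖(n : ℝ)⁻¹ • ∑ i, Φ (X i ω)‖ + ‖μ0‖ := norm_sub_le _ _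
      _ ≤ 2 := by linarith [hμhn ω]
    nlinarith [norm_nonneg ((n : ℝ)⁻¹ • ∑ i, Φ (X i ω) - μ0)]
  have hgint : Integrable (fun ω => 6 * (1/n) + 8 * ‖m θs - μ0‖ ^ 2
      + 10 * ‖(n : ℝ)⁻¹ • ∑ i, Φ (X i ω) - μ0‖ ^ 2) ℙ :=
    (integrable_const _).add (hhint.const_mul 10)
  have hconc := emp_conc Φ hΦmeas hΦbdd P0 μ0 hμ0 hn X hXmeas hiid hlaw
  calc (∫ ω, ∫ θ, ‖m θ - μ0‖ ^ 2 ∂(ρtilde ω) ∂ℙ)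
      ≤ ∫ ω, (6 * (1/n) + 8 * ‖m θs - μ0‖ ^ 2
          + 10 * ‖(n : ℝ)⁻¹ • ∑ i, Φ (X i ω) - μ0‖ ^ 2) ∂ℙ := by
        refine integral_mono_of_nonneg (ae_of_all _ fun ω => ?_) hgint (ae_of_all _ key)
        exact integral_nonneg fun θ => by positivity
    _ = 6 * (1/n) + 8 * ‖m θs - μ0‖ ^ 2
          + 10 * ∫ ω, ‖(n : ℝ)⁻¹ • ∑ i, Φ (X i ω) - μ0‖ ^ 2 ∂ℙ := by
        rw [integral_add (integrable_const _) (hhint.const_mul 10), integral_const,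
          integral_const_mul]
        simp [measure_univ]
    _ ≤ 8 * (⨅ θ, ‖m θ - μ0‖ ^ 2) + 16 / n := by
        rw [hinf]
        have h16 : (16:ℝ) / n = 6 * (1/n) + 10 * (1/n) := by ring
        linarith
end
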